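/- arXiv:1109.1779 — 7 statements merged into one kernel-verified Lean document; each statement's English description precedes it below -/
import Mathlib

section
/- The infimum over all k-extendible states σ_{ABab} of tr(X σ_{ABab}) equals the minimal eigenvalue of Ŝₖ(X ⊗ I_{Ee})/(k+1), where Ŝₖ is the symmetrization ∑ᵢ₌₀ᵏ V_{B₀b₀:Bᵢbᵢ} (X ⊗ I) V_{B₀b₀:Bᵢbᵢ}; in particular the infimum is negative iff λ_min(Ŝₖ(X ⊗ I_{Ee})) < 0. -/
open Matrix ComplexOrder

set_option linter.unusedSectionVars false
set_option maxHeartbeats 4000000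

/-- Reduction of a state on `A ⊗ B^{⊗(k+1)}` to system `A` and the `i`-th copy of `B`
(partial trace over the other copies). -/
noncomputable def red {α β : Type*} [Fintype α] [Fintype β] [DecidableEq β] (k : ℕ)
    (σ : Matrix (α × (Fin (k + 1) → β)) (α × (Fin (k + 1) → β)) ℂ) (i : Fin (k + 1)) :
    Matrix (α × β) (α × β) ℂ :=
  Matrix.of fun p q =>
    ((Fintype.card β : ℂ))⁻¹ *
      ∑ f : Fin (k + 1) → β,
        σ (p.1, Function.update f i p.2) (q.1, Function.update f i q.2)

/-- A state on `α × β` is `k`-extendible (on the second system) if it has a symmetric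
extension to `k+1` copies of `β` whose reduction to each copy equals the state. -/
noncomputable def kExtendible {α β : Type*} [Fintype α] [Fintype β] [DecidableEq β]
    (k : ℕ) (σ : Matrix (α × β) (α × β) ℂ) : Prop :=
  ∃ σ' : Matrix (α × (Fin (k + 1) → β)) (α × (Fin (k + 1) → β)) ℂ,
    σ'.PosSemidef ∧ σ'.trace = 1 ∧ ∀ i, red k σ' i = σ

/-- `V_{B₀b₀:Bᵢbᵢ} (X ⊗ I) V_{B₀b₀:Bᵢbᵢ}` : the operator `X` acting on `A` and the `i`-th
copy of `B`, tensored with the identity on the remaining copies. -/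
noncomputable def embedAt {α β : Type*} [Fintype α] [Fintype β] [DecidableEq β] (k : ℕ)
    (X : Matrix (α × β) (α × β) ℂ) (i : Fin (k + 1)) :
    Matrix (α × (Fin (k + 1) → β)) (α × (Fin (k + 1) → β)) ℂ :=
  Matrix.of fun p q =>
    X (p.1, p.2 i) (q.1, q.2 i) * (if ∀ j, j ≠ i → p.2 j = q.2 j then 1 else 0)

/-- The symmetrization `Ŝₖ(X ⊗ I) = ∑ᵢ V_{B₀b₀:Bᵢbᵢ} (X ⊗ I) V_{B₀b₀:Bᵢbᵢ}`. -/
noncomputable def Shat {α β : Type*} [Fintype α] [Fintype β] [DecidableEq β] (k : ℕ)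
    (X : Matrix (α × β) (α × β) ℂ) :
    Matrix (α × (Fin (k + 1) → β)) (α × (Fin (k + 1) → β)) ℂ :=
  ∑ i, embedAt k X i

section Helpers

variable {α β : Type*} [Fintype α] [Fintype β] [DecidableEq α] [DecidableEq β]

/-- involution `(b, f) ↦ (f i, update f i b)` -/
def updEquiv (k : ℕ) (i : Fin (k+1)) : β × (Fin (k+1) → β) ≃ β × (Fin (k+1) → β) where
  toFun bf := (bf.2 i, Function.update bf.2 i bf.1)
  invFun bf := (bf.2 i, Function.update bf.2 i bf.1)
  left_inv := by
    rintro ⟨b, f⟩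
    simp [Function.update_idem]
  right_inv := by
    rintro ⟨b, f⟩
    simp [Function.update_idem]

lemma sum_update_eq (k : ℕ) (i : Fin (k+1)) (H : (Fin (k+1) → β) → ℂ) :
    ∑ bf : β × (Fin (k+1) → β), H (Function.update bf.2 i bf.1)
      = (Fintype.card β : ℂ) * ∑ f, H f := by
  have := Equiv.sum_comp (updEquiv k i)
    (fun bf : β × (Fin (k+1) → β) => H (Function.update bf.2 i bf.1))
  simp only [updEquiv, Equiv.coe_fn_mk, Function.update_idem, Function.update_eq_self] at this
  rw [← this, Fintype.sum_prod_type]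
  simp [Finset.mul_sum, Finset.sum_const, Finset.card_univ]

lemma sum_ite_update (k : ℕ) (i : Fin (k+1)) (f : Fin (k+1) → β) (T : (Fin (k+1) → β) → ℂ) :
    ∑ h, (if Function.update f i (h i) = h then T h else 0)
      = ∑ c : β, T (Function.update f i c) := by
  have key : ∀ h : Fin (k+1) → β, (if Function.update f i (h i) = h then T h else 0)
      = ∑ c : β, if h = Function.update f i c then T h else 0 := by
    intro h
    by_cases hP : Function.update f i (h i) = h
    · rw [if_pos hP]
      symm
      have : ∀ c : β, (h = Function.update f i c) ↔ (c = h i) := by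
        intro c
        constructor
        · intro hc; rw [hc]; simp
        · intro hc; rw [hc, hP]
      calc (∑ c : β, if h = Function.update f i c then T h else 0)
          = ∑ c : β, if c = h i then T h else 0 := by
            refine Finset.sum_congr rfl fun c _ => ?_
            exact if_congr (this c) rfl rfl
        _ = T h := by simp
    · rw [if_neg hP]
      symm
      refine Finset.sum_eq_zero fun c _ => ?_
      rw [if_neg]
      intro hc
      apply hP
      rw [hc]
      simp
  rw [Finset.sum_congr rfl fun h _ => key h, Finset.sum_comm]
  refine Finset.sum_congr rfl fun c _ => ?_
  simp

lemma cond_iff (k : ℕ) (i : Fin (k+1)) (f h : Fin (k+1) → β) :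
    (∀ j, j ≠ i → f j = h j) ↔ Function.update f i (h i) = h := by
  constructor
  · intro hp
    funext j
    by_cases hj : j = i
    · subst hj; simp
    · rw [Function.update_of_ne hj]; exact hp j hj
  · intro hp j hj
    conv_rhs => rw [← hp]
    rw [Function.update_of_ne hj]

lemma trace_mul_eq {m : Type v} [Fintype m] (A B : Matrix m m ℂ) :
    (A*B).trace = ∑ p : m, ∑ q : m, A p q * B q p := by
  simp [Matrix.trace, Matrix.mul_apply, Matrix.diag]

lemma trace_mul_red [Nonempty β] (k : ℕ) (Y : Matrix (α × β) (α × β) ℂ)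
    (ρ : Matrix (α × (Fin (k + 1) → β)) (α × (Fin (k + 1) → β)) ℂ) (i : Fin (k+1)) :
    (Y * red k ρ i).trace = (embedAt k Y i * ρ).trace := by
  have hcard : (Fintype.card β : ℂ) ≠ 0 := by
    simp [Fintype.card_ne_zero]
  have lhs : (Y * red k ρ i).trace
      = (Fintype.card β : ℂ)⁻¹ * ∑ a : α, ∑ x : β, ∑ b : α, ∑ c : β, ∑ f : Fin (k+1) → β,
          Y (a, x) (b, c) * ρ (b, Function.update f i c) (a, Function.update f i x) := by
    rw [trace_mul_eq]
    rw [Fintype.sum_prod_type]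
    simp only [Finset.mul_sum]
    refine Finset.sum_congr rfl fun a _ => ?_
    refine Finset.sum_congr rfl fun x _ => ?_
    rw [Fintype.sum_prod_type]
    refine Finset.sum_congr rfl fun b _ => ?_
    refine Finset.sum_congr rfl fun c _ => ?_
    simp only [red, Matrix.of_apply, Finset.mul_sum]
    refine Finset.sum_congr rfl fun f _ => ?_
    ring
  have rhs : (embedAt k Y i * ρ).trace
      = (Fintype.card β : ℂ)⁻¹ * ∑ a : α, ∑ x : β, ∑ b : α, ∑ c : β, ∑ f : Fin (k+1) → β,
          Y (a, x) (b, c) * ρ (b, Function.update f i c) (a, Function.update f i x) := by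
    rw [trace_mul_eq, Fintype.sum_prod_type]
    have step1 : ∀ (a : α) (f : Fin (k+1) → β),
        ∑ q : α × (Fin (k+1) → β), embedAt k Y i (a, f) q * ρ q (a, f)
          = ∑ b : α, ∑ c : β, Y (a, f i) (b, c) * ρ (b, Function.update f i c) (a, f) := by
      intro a f
      rw [Fintype.sum_prod_type]
      refine Finset.sum_congr rfl fun b _ => ?_
      have : ∀ h : Fin (k+1) → β, embedAt k Y i (a, f) (b, h) * ρ (b, h) (a, f)
          = (if Function.update f i (h i) = h
              then Y (a, f i) (b, h i) * ρ (b, h) (a, f) else 0) := by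
        intro h
        simp only [embedAt, Matrix.of_apply]
        rw [if_congr (cond_iff k i f h) rfl rfl]
        by_cases hc : Function.update f i (h i) = h <;> simp [hc]
      rw [Finset.sum_congr rfl fun h _ => this h,
        sum_ite_update k i f (fun h => Y (a, f i) (b, h i) * ρ (b, h) (a, f))]
      refine Finset.sum_congr rfl fun c _ => ?_
      simp
    simp only [step1]
    rw [Finset.mul_sum]
    refine Finset.sum_congr rfl fun a _ => ?_
    have := sum_update_eq k i (fun f => ∑ b : α, ∑ c : β,
        Y (a, f i) (b, c) * ρ (b, Function.update f i c) (a, f))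
    rw [Fintype.sum_prod_type] at this
    have h2 : ∑ f : Fin (k+1) → β, (∑ b : α, ∑ c : β,
        Y (a, f i) (b, c) * ρ (b, Function.update f i c) (a, f))
        = (Fintype.card β : ℂ)⁻¹ * ∑ x : β, ∑ f : Fin (k+1) → β, ∑ b : α, ∑ c : β,
            Y (a, x) (b, c) * ρ (b, Function.update f i c) (a, Function.update f i x) := by
      rw [eq_inv_mul_iff_mul_eq₀ hcard]
      rw [← this]
      refine Finset.sum_congr rfl fun x _ => ?_
      refine Finset.sum_congr rfl fun f _ => ?_
      simp [Function.update_idem]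
    rw [h2]
    congr 1
    refine Finset.sum_congr rfl fun x _ => ?_
    rw [Finset.sum_comm]
    refine Finset.sum_congr rfl fun b _ => ?_
    rw [Finset.sum_comm]
  rw [lhs, rhs]

lemma embedAt_one (k : ℕ) (i : Fin (k+1)) :
    embedAt k (1 : Matrix (α × β) (α × β) ℂ) i = 1 := by
  ext ⟨a, x⟩ ⟨b, y⟩
  simp only [embedAt, Matrix.of_apply, Matrix.one_apply, Prod.mk.injEq, Prod.ext_iff]
  by_cases hab : a = b
  · by_cases hxy : x = y
    · subst hab; subst hxy; simp
    · have h1 : ¬(x i = y i ∧ ∀ j, j ≠ i → x j = y j) ∨ ¬ True := by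
        by_cases hi : x i = y i
        · left
          rintro ⟨-, hoff⟩
          apply hxy
          funext j
          by_cases hj : j = i
          · subst hj; exact hi
          · exact hoff j hj
        · left; rintro ⟨h, -⟩; exact hi h
      rcases h1 with h1 | h1
      · by_cases hc : ∀ j, j ≠ i → x j = y j
        · have hi : ¬ x i = y i := fun hh => h1 ⟨hh, hc⟩
          simp [hab, hxy, hc, hi]
        · simp [hab, hxy, hc]
      · simp at h1
  · simp [hab]

lemma red_trace [Nonempty β] (k : ℕ)
    (ρ : Matrix (α × (Fin (k + 1) → β)) (α × (Fin (k + 1) → β)) ℂ) (i : Fin (k+1)) :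
    (red k ρ i).trace = ρ.trace := by
  have h1 := trace_mul_red k (1 : Matrix (α × β) (α × β) ℂ) ρ i
  rwa [embedAt_one, one_mul, one_mul] at h1

lemma red_smul (k : ℕ) (c : ℂ) (ρ : Matrix (α × (Fin (k + 1) → β)) (α × (Fin (k + 1) → β)) ℂ)
    (i : Fin (k+1)) : red k (c • ρ) i = c • red k ρ i := by
  ext p q
  simp only [red, Matrix.of_apply, Matrix.smul_apply, smul_eq_mul, Finset.mul_sum]
  refine Finset.sum_congr rfl fun f _ => ?_
  ring

lemma red_sum {ι : Type*} (k : ℕ) (s : Finset ι)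
    (ρ : ι → Matrix (α × (Fin (k + 1) → β)) (α × (Fin (k + 1) → β)) ℂ) (i : Fin (k+1)) :
    red k (∑ c ∈ s, ρ c) i = ∑ c ∈ s, red k (ρ c) i := by
  ext p q
  simp only [red, Matrix.of_apply, Matrix.sum_apply, Finset.mul_sum]
  rw [Finset.sum_comm]

lemma red_psd (k : ℕ) {ρ : Matrix (α × (Fin (k + 1) → β)) (α × (Fin (k + 1) → β)) ℂ}
    (hρ : ρ.PosSemidef) (i : Fin (k+1)) : (red k ρ i).PosSemidef := by
  refine posSemidef_iff_dotProduct_mulVec.mpr ⟨?_, ?_⟩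
  · ext p q
    simp only [Matrix.conjTranspose_apply, red, Matrix.of_apply, star_mul', star_inv₀,
      star_natCast, star_sum]
    congr 1
    refine Finset.sum_congr rfl fun f _ => ?_
    exact congrFun (congrFun hρ.1 _) _
  · intro x
    set z : (Fin (k+1) → β) → (α × (Fin (k+1) → β)) → ℂ := fun f p =>
      if Function.update f i (p.2 i) = p.2 then x (p.1, p.2 i) else 0 with hz
    have key : star x ⬝ᵥ (red k ρ i *ᵥ x)
        = (Fintype.card β : ℂ)⁻¹ * ∑ f : Fin (k+1) → β, star (z f) ⬝ᵥ (ρ *ᵥ z f) := by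
      have rhsf : ∀ f : Fin (k+1) → β, star (z f) ⬝ᵥ (ρ *ᵥ z f)
          = ∑ p : α × β, ∑ q : α × β,
              star (x p) * ρ (p.1, Function.update f i p.2) (q.1, Function.update f i q.2) * x q := by
        intro f
        simp only [Fintype.sum_prod_type]
        have inner : ∀ p : α × (Fin (k+1) → β), (ρ *ᵥ z f) p
            = ∑ b : α, ∑ d : β, ρ p (b, Function.update f i d) * x (b, d) := by
          intro p
          simp only [Matrix.mulVec, dotProduct, Fintype.sum_prod_type, hz]
          refine Finset.sum_congr rfl fun b _ => ?_
          have : ∀ h : Fin (k+1) → β,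
              ρ p (b, h) * (if Function.update f i (h i) = h then x (b, h i) else 0)
              = (if Function.update f i (h i) = h then ρ p (b, h) * x (b, h i) else 0) := by
            intro h; by_cases hc : Function.update f i (h i) = h <;> simp [hc]
          rw [Finset.sum_congr rfl fun h _ => this h,
            sum_ite_update k i f (fun h => ρ p (b, h) * x (b, h i))]
          refine Finset.sum_congr rfl fun d _ => ?_
          simp
        simp only [dotProduct, Pi.star_apply, inner, Fintype.sum_prod_type]
        refine Finset.sum_congr rfl fun a _ => ?_
        have : ∀ g : Fin (k+1) → β,
            star (z f (a, g)) * (∑ b : α, ∑ d : β, ρ (a, g) (b, Function.update f i d) * x (b, d))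
            = (if Function.update f i (g i) = g then
                star (x (a, g i)) * (∑ b : α, ∑ d : β, ρ (a, g) (b, Function.update f i d) * x (b, d))
              else 0) := by
          intro g
          simp only [hz]
          by_cases hc : Function.update f i (g i) = g <;> simp [hc]
        rw [Finset.sum_congr rfl fun g _ => this g,
          sum_ite_update k i f (fun g => star (x (a, g i)) *
            (∑ b : α, ∑ d : β, ρ (a, g) (b, Function.update f i d) * x (b, d)))]
        refine Finset.sum_congr rfl fun c _ => ?_
        simp only [Function.update_self, Finset.mul_sum]
        refine Finset.sum_congr rfl fun b _ => ?_
        refine Finset.sum_congr rfl fun d _ => ?_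
        ring
      simp only [rhsf]
      simp only [Matrix.mulVec, dotProduct, Pi.star_apply, red, Matrix.of_apply]
      have h1 : ∀ p : α × β, star (x p) * (∑ q : α × β,
            ((Fintype.card β : ℂ)⁻¹ * ∑ f : Fin (k+1) → β,
              ρ (p.1, Function.update f i p.2) (q.1, Function.update f i q.2)) * x q)
          = (Fintype.card β : ℂ)⁻¹ * ∑ f : Fin (k+1) → β, ∑ q : α × β,
              star (x p) * ρ (p.1, Function.update f i p.2) (q.1, Function.update f i q.2) * x q := by
        intro p
        rw [Finset.mul_sum]
        have h0 : ∀ q : α × β, star (x p) * (((Fintype.card β : ℂ)⁻¹ * ∑ f : Fin (k+1) → β,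
              ρ (p.1, Function.update f i p.2) (q.1, Function.update f i q.2)) * x q)
            = (Fintype.card β : ℂ)⁻¹ * ∑ f : Fin (k+1) → β,
              star (x p) * ρ (p.1, Function.update f i p.2) (q.1, Function.update f i q.2) * x q := by
          intro q
          rw [Finset.mul_sum, Finset.sum_mul, Finset.mul_sum, Finset.mul_sum]
          refine Finset.sum_congr rfl fun f _ => ?_
          ring
        simp only [h0]
        rw [← Finset.mul_sum]
        congr 1
        exact Finset.sum_comm
      simp only [h1]
      rw [← Finset.mul_sum]
      congr 1
      exact Finset.sum_comm
    rw [key]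
    refine mul_nonneg ?_ (Finset.sum_nonneg fun f _ => hρ.dotProduct_mulVec_nonneg (z f))
    have e1 : ((Fintype.card β : ℂ))⁻¹ = Complex.ofReal ((Fintype.card β : ℝ)⁻¹) := by
      rw [Complex.ofReal_inv]; norm_num
    rw [e1, Complex.zero_le_real]
    positivity

def fEquiv {β : Type*} (k : ℕ) (π : Fin (k+1) ≃ Fin (k+1)) :
    (Fin (k+1) → β) ≃ (Fin (k+1) → β) where
  toFun f := f ∘ π
  invFun f := f ∘ π.symm
  left_inv f := by funext t; simp
  right_inv f := by funext t; simp

def permEquiv {α β : Type*} (k : ℕ) (π : Fin (k+1) ≃ Fin (k+1)) :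
    (α × (Fin (k+1) → β)) ≃ (α × (Fin (k+1) → β)) :=
  (Equiv.refl α).prodCongr (fEquiv k π)

lemma update_comp {β : Type*} [DecidableEq β] (k : ℕ) (π : Fin (k+1) ≃ Fin (k+1))
    (f : Fin (k+1) → β) (j : Fin (k+1)) (x : β) :
    (Function.update f j x) ∘ π = Function.update (f ∘ π) (π.symm j) x := by
  funext t
  simp only [Function.comp_apply, Function.update_apply]
  by_cases ht : π t = j
  · rw [if_pos ht, if_pos (by rw [Equiv.eq_symm_apply]; exact ht)]
  · rw [if_neg ht, if_neg]
    intro hc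
    exact ht (by rw [hc]; simp)

lemma red_submatrix (k : ℕ) (ρ : Matrix (α × (Fin (k + 1) → β)) (α × (Fin (k + 1) → β)) ℂ)
    (π : Fin (k+1) ≃ Fin (k+1)) (j : Fin (k+1)) :
    red k (ρ.submatrix (permEquiv k π) (permEquiv k π)) j = red k ρ (π.symm j) := by
  ext p q
  simp only [red, Matrix.of_apply, Matrix.submatrix_apply, permEquiv, Equiv.prodCongr_apply,
    Equiv.coe_refl, Prod.map, id_eq, fEquiv, Equiv.coe_fn_mk]
  congr 1
  rw [← Equiv.sum_comp (fEquiv k π) (fun f => ρ (p.1, Function.update f (π.symm j) p.2)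
    (q.1, Function.update f (π.symm j) q.2))]
  refine Finset.sum_congr rfl fun f _ => ?_
  simp only [fEquiv, Equiv.coe_fn_mk]
  rw [update_comp, update_comp]

lemma trace_submatrix_equiv' {n : Type*} [Fintype n] (e : n ≃ n) (M : Matrix n n ℂ) :
    (M.submatrix e e).trace = M.trace := by
  simp only [Matrix.trace, Matrix.diag, Matrix.submatrix_apply]
  exact Equiv.sum_comp e (fun i => M i i)

lemma quad_lower {n : Type*} [Fintype n] [DecidableEq n] [Nonempty n] {M : Matrix n n ℂ}
    (hM : M.IsHermitian) (x : n → ℂ) :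
    (⨅ p, hM.eigenvalues p) * (star x ⬝ᵥ x).re ≤ (star x ⬝ᵥ (M *ᵥ x)).re := by
  set U : Matrix n n ℂ := (hM.eigenvectorUnitary : Matrix n n ℂ) with hU
  set y : n → ℂ := (star U) *ᵥ x with hy
  have hsy : star y = star x ᵥ* U := by
    rw [hy, star_mulVec, star_eq_conjTranspose, conjTranspose_conjTranspose]
  have h1 : star x ⬝ᵥ (M *ᵥ x)
      = star y ⬝ᵥ (diagonal (RCLike.ofReal ∘ hM.eigenvalues) *ᵥ y) := by
    conv_lhs => rw [hM.spectral_theorem, Unitary.conjStarAlgAut_apply]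
    rw [← mulVec_mulVec, ← mulVec_mulVec, dotProduct_mulVec, ← hsy, hy]
  have h2 : star x ⬝ᵥ x = star y ⬝ᵥ y := by
    rw [hsy, hy]
    rw [← dotProduct_mulVec, mulVec_mulVec]
    rw [show U * star U = 1 from (Matrix.mem_unitaryGroup_iff).mp hM.eigenvectorUnitary.2]
    rw [one_mulVec]
  rw [h1, h2]
  have h3 : (star y ⬝ᵥ (diagonal (RCLike.ofReal ∘ hM.eigenvalues) *ᵥ y)).re
      = ∑ p, hM.eigenvalues p * Complex.normSq (y p) := by
    simp only [dotProduct, mulVec_diagonal, Pi.star_apply, Function.comp_apply]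
    rw [Complex.re_sum]
    refine Finset.sum_congr rfl fun p _ => ?_
    have e : (RCLike.ofReal (hM.eigenvalues p) : ℂ) = Complex.ofReal (hM.eigenvalues p) := rfl
    simp only [RCLike.star_def, e]
    simp [Complex.normSq_apply, Complex.mul_re, Complex.mul_im]
    ring
  have h4 : (star y ⬝ᵥ y).re = ∑ p, Complex.normSq (y p) := by
    simp only [dotProduct, Pi.star_apply, RCLike.star_def]
    rw [Complex.re_sum]
    refine Finset.sum_congr rfl fun p _ => ?_
    simp [Complex.normSq_apply, Complex.mul_re]
  rw [h3, h4, Finset.mul_sum]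
  refine Finset.sum_le_sum fun p _ => ?_
  refine mul_le_mul_of_nonneg_right ?_ (Complex.normSq_nonneg _)
  exact ciInf_le (Set.Finite.bddBelow (Set.finite_range _)) p

lemma trace_lower {n : Type*} [Fintype n] [DecidableEq n] [Nonempty n] {M : Matrix n n ℂ}
    (hM : M.IsHermitian) {ρ : Matrix n n ℂ} (hρ : ρ.PosSemidef) :
    (⨅ p, hM.eigenvalues p) * ρ.trace.re ≤ ((M * ρ).trace).re := by
  obtain ⟨B, hB⟩ : ∃ B : Matrix n n ℂ, ρ = Bᴴ * B := by
    open scoped MatrixOrder in exact CStarAlgebra.nonneg_iff_eq_star_mul_self.mp hρ.nonneg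
  subst hB
  have h1 : (M * (Bᴴ * B)).trace = (B * M * Bᴴ).trace := by
    rw [← mul_assoc, trace_mul_cycle]
  have h2 : ∀ j, (B * M * Bᴴ) j j
      = star (fun p => star (B j p)) ⬝ᵥ (M *ᵥ (fun p => star (B j p))) := by
    intro j
    simp only [dotProduct, mulVec, mul_apply, conjTranspose_apply, Pi.star_apply, star_star,
      Finset.sum_mul, Finset.mul_sum]
    rw [Finset.sum_comm]
    refine Finset.sum_congr rfl fun p _ => ?_
    refine Finset.sum_congr rfl fun q _ => ?_
    ring
  have h4 : (Bᴴ * B).trace = ∑ j, star (fun p => star (B j p)) ⬝ᵥ ((fun p => star (B j p)) : n → ℂ) := by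
    simp only [Matrix.trace, Matrix.diag, mul_apply, conjTranspose_apply, dotProduct,
      Pi.star_apply, star_star]
    rw [Finset.sum_comm]
    refine Finset.sum_congr rfl fun j _ => ?_
    refine Finset.sum_congr rfl fun p _ => ?_
    ring
  have h5 : (B * M * Bᴴ).trace
      = ∑ j, star (fun p => star (B j p)) ⬝ᵥ (M *ᵥ (fun p => star (B j p))) := by
    simp only [Matrix.trace, Matrix.diag]
    exact Finset.sum_congr rfl fun j _ => h2 j
  rw [h1, h4, h5, Complex.re_sum, Complex.re_sum, Finset.mul_sum]
  exact Finset.sum_le_sum fun j _ => quad_lower hM _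

lemma psd_smul_real {n : Type*} [Fintype n] {M : Matrix n n ℂ} (hM : M.PosSemidef)
    (r : ℝ) (hr : 0 ≤ r) : ((r : ℂ) • M).PosSemidef := by
  refine posSemidef_iff_dotProduct_mulVec.mpr ⟨?_, ?_⟩
  · ext p q
    simp only [Matrix.conjTranspose_apply, Matrix.smul_apply, star_mul', Complex.conj_ofReal,
      smul_eq_mul]
    congr 1
    · rw [Complex.star_def, Complex.conj_ofReal]
    · exact congrFun (congrFun hM.1 _) _
  · intro x
    rw [smul_mulVec, dotProduct_smul, smul_eq_mul]
    exact mul_nonneg (Complex.zero_le_real.mpr hr) (hM.dotProduct_mulVec_nonneg x)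

end Helpers

/-- the infimum over all `k`-extendible states σ of `tr(Xσ)` equals
`λ_min(Ŝₖ(X ⊗ I))/(k+1)`; in particular it is negative iff `λ_min(Ŝₖ(X ⊗ I)) < 0`. -/
theorem stmt4 {α β : Type*} [Fintype α] [Fintype β] [DecidableEq α] [DecidableEq β]
    [Nonempty α] [Nonempty β] (k : ℕ)
    (X : Matrix (α × β) (α × β) ℂ) (hX : X.IsHermitian)
    (hS : (Shat k X).IsHermitian) :
    sInf {r : ℝ | ∃ σ : Matrix (α × β) (α × β) ℂ,
        σ.PosSemidef ∧ σ.trace = 1 ∧ kExtendible k σ ∧ r = ((X * σ).trace).re}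
      = (⨅ p, hS.eigenvalues p) / (k + 1) ∧
    (sInf {r : ℝ | ∃ σ : Matrix (α × β) (α × β) ℂ,
        σ.PosSemidef ∧ σ.trace = 1 ∧ kExtendible k σ ∧ r = ((X * σ).trace).re} < 0 ↔
      (⨅ p, hS.eigenvalues p) < 0) := by
  set S : Set ℝ := {r : ℝ | ∃ σ : Matrix (α × β) (α × β) ℂ,
      σ.PosSemidef ∧ σ.trace = 1 ∧ kExtendible k σ ∧ r = ((X * σ).trace).re} with hSdef
  set lam : ℝ := ⨅ p, hS.eigenvalues p with hlam
  have hk1 : (0 : ℝ) < (k : ℝ) + 1 := by positivity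
  -- Lower bound
  have lower : ∀ r ∈ S, lam / ((k : ℝ) + 1) ≤ r := by
    rintro r ⟨σ, hσpsd, hσtr, ⟨σ', hσ'psd, hσ'tr, hred⟩, hr⟩
    have key : (Shat k X * σ').trace = ((k : ℕ) + 1 : ℕ) • ((X * σ).trace) := by
      rw [Shat, Finset.sum_mul, trace_sum]
      rw [Finset.sum_congr rfl (fun i _ => ((trace_mul_red k X σ' i).symm).trans
        (by rw [hred i]))]
      simp
    have hre : ((Shat k X * σ').trace).re = ((k : ℝ) + 1) * r := by
      rw [key, hr]
      push_cast
      simp [Complex.re_nsmul]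
    have hlb := trace_lower hS hσ'psd
    rw [hσ'tr] at hlb
    simp only [Complex.one_re, mul_one] at hlb
    rw [hre] at hlb
    rw [div_le_iff₀ hk1]
    linarith
  -- Achievability
  have mem : lam / ((k : ℝ) + 1) ∈ S := by
    obtain ⟨p₀, -, hp₀⟩ := Finset.exists_min_image (Finset.univ)
      (fun p => hS.eigenvalues p) ⟨Classical.arbitrary _, Finset.mem_univ _⟩
    have hmin : lam = hS.eigenvalues p₀ := by
      refine le_antisymm (ciInf_le (Set.Finite.bddBelow (Set.finite_range _)) p₀) ?_
      exact le_ciInf fun p => hp₀ p (Finset.mem_univ p)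
    set v : (α × (Fin (k+1) → β)) → ℂ := ⇑(hS.eigenvectorBasis p₀) with hv
    have hv1 : star v ⬝ᵥ v = 1 := by
      have h := hS.eigenvectorBasis.orthonormal.1 p₀
      have h2 : (inner ℂ (hS.eigenvectorBasis p₀) (hS.eigenvectorBasis p₀) : ℂ) = 1 := by
        rw [inner_self_eq_norm_sq_to_K, h]
        norm_num
      rw [EuclideanSpace.inner_eq_star_dotProduct] at h2
      rw [dotProduct_comm] at h2
      exact h2
    have hv2 : Shat k X *ᵥ v = hS.eigenvalues p₀ • v := hS.mulVec_eigenvectorBasis p₀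
    set ρ : Matrix (α × (Fin (k+1) → β)) (α × (Fin (k+1) → β)) ℂ := vecMulVec v (star v) with hρ
    have hρpsd : ρ.PosSemidef := by
      refine posSemidef_iff_dotProduct_mulVec.mpr ⟨?_, ?_⟩
      · ext p q
        simp [hρ, vecMulVec_apply, Matrix.conjTranspose_apply, mul_comm]
      · intro x
        have hcalc : star x ⬝ᵥ (ρ *ᵥ x) = star (star v ⬝ᵥ x) * (star v ⬝ᵥ x) := by
          simp only [hρ, vecMulVec_apply, Matrix.mulVec, dotProduct, Pi.star_apply,
            star_sum, star_mul', star_star, Finset.mul_sum, Finset.sum_mul]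
          rw [Finset.sum_comm]
          refine Finset.sum_congr rfl fun p _ => ?_
          refine Finset.sum_congr rfl fun q _ => ?_
          ring
        rw [hcalc]
        exact star_mul_self_nonneg _
    have hρtr : ρ.trace = 1 := by
      rw [← hv1]
      simp only [hρ, Matrix.trace, Matrix.diag, vecMulVec_apply, dotProduct, Pi.star_apply]
      refine Finset.sum_congr rfl fun p _ => ?_
      ring
    have hρS : (Shat k X * ρ).trace = ((hS.eigenvalues p₀ : ℝ) : ℂ) := by
      have h1 : (Shat k X * ρ).trace = star v ⬝ᵥ (Shat k X *ᵥ v) := by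
        rw [trace_mul_eq]
        simp only [hρ, vecMulVec_apply, Matrix.mulVec, dotProduct, Pi.star_apply,
          Finset.mul_sum]
        refine Finset.sum_congr rfl fun p _ => ?_
        refine Finset.sum_congr rfl fun q _ => ?_
        ring
      rw [h1, hv2, dotProduct_smul, hv1]
      rw [Complex.real_smul, mul_one]
    -- symmetrized extension
    set r : ℝ := ((k : ℝ) + 1)⁻¹ with hrdef
    set σ' : Matrix (α × (Fin (k+1) → β)) (α × (Fin (k+1) → β)) ℂ :=
      (r : ℂ) • ∑ c : Fin (k+1),
        ρ.submatrix (permEquiv k (Equiv.addLeft c)) (permEquiv k (Equiv.addLeft c)) with hσ'def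
    have hsum_psd : (∑ c : Fin (k+1),
        ρ.submatrix (permEquiv k (Equiv.addLeft c)) (permEquiv k (Equiv.addLeft c))).PosSemidef := by
      refine Finset.sum_induction _ Matrix.PosSemidef
        (fun a b ha hb => ha.add hb) Matrix.PosSemidef.zero (fun c _ => hρpsd.submatrix _)
    have hσ'psd : σ'.PosSemidef := psd_smul_real hsum_psd r (by positivity)
    have htr : σ'.trace = 1 := by
      rw [hσ'def, trace_smul, trace_sum]
      rw [Finset.sum_congr rfl (fun c _ => trace_submatrix_equiv' _ _)]
      simp only [hρtr, Finset.sum_const, Finset.card_univ, Fintype.card_fin, nsmul_eq_mul,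
        mul_one, smul_eq_mul]
      have hne : ((k:ℂ)+1) ≠ 0 := by exact_mod_cast Nat.succ_ne_zero k
      rw [hrdef]
      push_cast
      field_simp
    set σ : Matrix (α × β) (α × β) ℂ := (r : ℂ) • ∑ i : Fin (k+1), red k ρ i with hσdef
    have hredj : ∀ j, red k σ' j = σ := by
      intro j
      rw [hσ'def, red_smul, red_sum, hσdef]
      congr 1
      rw [Finset.sum_congr rfl (fun c _ => red_submatrix k ρ (Equiv.addLeft c) j)]
      have he : ∀ c : Fin (k+1), red k ρ ((Equiv.addLeft c).symm j)
          = red k ρ (Equiv.subLeft j c) := by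
        intro c
        congr 1
        simp [Equiv.subLeft, sub_eq_neg_add]
      rw [Finset.sum_congr rfl (fun c _ => he c)]
      exact Equiv.sum_comp (Equiv.subLeft j) (fun i => red k ρ i)
    have hσpsd : σ.PosSemidef := by
      rw [← hredj 0]; exact red_psd k hσ'psd 0
    have hσtr : σ.trace = 1 := by
      rw [← hredj 0, red_trace, htr]
    refine ⟨σ, hσpsd, hσtr, ⟨σ', hσ'psd, htr, hredj⟩, ?_⟩
    have hval : (X * σ).trace = (r : ℂ) * ((hS.eigenvalues p₀ : ℝ) : ℂ) := by
      rw [hσdef, Matrix.mul_smul, trace_smul, Matrix.mul_sum, trace_sum]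
      rw [Finset.sum_congr rfl (fun i _ => trace_mul_red k X ρ i)]
      rw [← trace_sum, ← Finset.sum_mul, ← Shat, hρS]
      rw [smul_eq_mul]
    rw [hval, hmin, ← Complex.ofReal_mul, Complex.ofReal_re, hrdef]
    rw [div_eq_inv_mul]
  have h1 : sInf S = lam / ((k : ℝ) + 1) := by
    exact IsGLB.csInf_eq ⟨fun r hr => lower r hr, fun b hb => hb mem⟩ ⟨_, mem⟩
  refine ⟨h1, ?_⟩
  rw [h1]
  constructor
  · intro h
    by_contra hc
    push_neg at hc
    have : 0 ≤ lam / ((k:ℝ)+1) := div_nonneg hc (le_of_lt hk1)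
    linarith
  · intro h
    exact div_neg_of_neg_of_pos h hk1
end

section
/- If a state σ_{AB} on C^{d_A}⊗C^{d_B} is k-extendible on Bob's side, then teleportation gives the cloning bound: on two qubits, the maximal overlap tr(σΦ⁺) of a k-extendible state σ with the maximally entangled state is (k+2)/(2(k+1)). In particular, for k=1 the maximum is 3/4. -/
open Matrix ComplexOrder

/-- Projector onto the maximally entangled state on `ℂ^d ⊗ ℂ^d`. -/
noncomputable def phiPlus (d : ℕ) : Matrix (Fin d × Fin d) (Fin d × Fin d) ℂ :=
  Matrix.of fun p q => if p.1 = p.2 ∧ q.1 = q.2 then (1 / d : ℂ) else 0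

namespace Stmt6Aux

variable {k : ℕ}

/-! ### Combinatorial helpers -/

def vv (k : ℕ) (α : Fin (k+1) × (Fin (k+1) → Fin 2))
    (p : Fin 2 × (Fin (k+1) → Fin 2)) : ℝ :=
  if p.2 = Function.update α.2 α.1 p.1 then 1 else 0

lemma vv_nonneg (α p) : 0 ≤ vv k α p := by
  unfold vv; split <;> norm_num

lemma sum_update_self {M : Type*} [AddCommMonoid M] (b : Fin (k+1) → Fin 2)
    (j : Fin (k+1)) (g : (Fin (k+1) → Fin 2) → M) :
    ∑ h : Fin (k+1) → Fin 2, (if h = Function.update b j (h j) then g h else 0)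
      = ∑ x : Fin 2, g (Function.update b j x) := by
  have key : ∀ h : Fin (k+1) → Fin 2,
      (if h = Function.update b j (h j) then g h else 0)
        = ∑ x : Fin 2, if h = Function.update b j x then g h else 0 := by
    intro h
    by_cases hc : h = Function.update b j (h j)
    · rw [if_pos hc]
      have heq : ∀ x : Fin 2, (h = Function.update b j x) ↔ (x = h j) := by
        intro x
        constructor
        · intro hx
          rw [hx, Function.update_self]
        · rintro rfl; exact hc
      simp only [heq]
      simp
    · rw [if_neg hc]
      symm
      apply Finset.sum_eq_zero
      intro x _
      rw [if_neg]
      intro hx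
      apply hc
      have : h j = x := by rw [hx, Function.update_self]
      rw [this]; exact hx
  simp_rw [key]
  rw [Finset.sum_comm]
  apply Finset.sum_congr rfl
  intro x _
  simp

lemma sum_update_eq {N : Type*} [AddCommMonoid N] (g : (Fin (k+1) → Fin 2) → N)
    (i : Fin (k+1)) (t : Fin 2) :
    ∑ f : Fin (k+1) → Fin 2, g (Function.update f i t)
      = ∑ x : Fin 2, ∑ f : Fin (k+1) → Fin 2, (if f i = t then g f else 0) := by
  have step1 : ∑ f : Fin (k+1) → Fin 2, g (Function.update f i t)
      = ∑ f : Fin (k+1) → Fin 2, ∑ x : Fin 2,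
          if f i = x then g (Function.update f i t) else 0 :=
    Finset.sum_congr rfl fun f _ => by
      rw [Finset.sum_ite_eq, if_pos (Finset.mem_univ _)]
  rw [step1, Finset.sum_comm]
  apply Finset.sum_congr rfl
  intro x _
  have hinv : Function.Involutive
      (fun f : Fin (k+1) → Fin 2 => Function.update f i (Equiv.swap x t (f i))) := by
    intro f
    simp only [Function.update_self, Function.update_idem, Equiv.swap_apply_self,
      Function.update_eq_self]
  refine Fintype.sum_bijective _ hinv.bijective _ _ ?_
  intro f
  by_cases hf : f i = x
  · simp only [hf, if_pos rfl, Function.update_self, Equiv.swap_apply_left, if_pos rfl]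
  · rw [if_neg hf, if_neg]
    simp only [Function.update_self]
    intro hcon
    exact hf (Equiv.swap x t |>.injective (by rw [hcon, Equiv.swap_apply_left]))

/-! ### Gram matrix row sums -/

lemma vv_rowsum (α : Fin (k+1) × (Fin (k+1) → Fin 2)) :
    ∑ β : Fin (k+1) × (Fin (k+1) → Fin 2), ∑ p, vv k α p * vv k β p
      = 2*k+4 := by
  rw [Finset.sum_comm]
  have inner : ∀ p : Fin 2 × (Fin (k+1) → Fin 2),
      ∑ β : Fin (k+1) × (Fin (k+1) → Fin 2), vv k β p
        = ∑ j : Fin (k+1), if p.2 j = p.1 then (2:ℝ) else 0 := by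
    intro p
    rw [Fintype.sum_prod_type]
    apply Finset.sum_congr rfl
    intro j _
    have hcond : ∀ h' : Fin (k+1) → Fin 2,
        (p.2 = Function.update h' j p.1) ↔
          (p.2 j = p.1 ∧ h' = Function.update p.2 j (h' j)) := by
      intro h'
      constructor
      · intro h
        constructor
        · rw [h, Function.update_self]
        · funext l
          by_cases hl : l = j
          · subst hl; simp
          · rw [Function.update_of_ne hl]
            have := congrFun h l
            rw [Function.update_of_ne hl] at this
            exact this.symm
      · rintro ⟨h1, h2⟩
        funext l
        by_cases hl : l = j
        · subst hl; rw [Function.update_self]; exact h1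
        · rw [Function.update_of_ne hl]
          conv_rhs => rw [h2]
          rw [Function.update_of_ne hl]
    unfold vv
    simp only [hcond, ite_and]
    by_cases hp : p.2 j = p.1
    · simp only [if_pos hp]
      rw [sum_update_self p.2 j (fun _ => (1:ℝ))]
      simp
    · simp only [if_neg hp, Finset.sum_const_zero]
  have pull : ∀ p : Fin 2 × (Fin (k+1) → Fin 2),
      ∑ β : Fin (k+1) × (Fin (k+1) → Fin 2), vv k α p * vv k β p
        = vv k α p * ∑ j : Fin (k+1), (if p.2 j = p.1 then (2:ℝ) else 0) := by
    intro p
    rw [← Finset.mul_sum, inner p]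
  simp_rw [pull]
  rw [Fintype.sum_prod_type]
  have collapse : ∀ a : Fin 2,
      (∑ b : Fin (k+1) → Fin 2, vv k α (a, b) *
          ∑ j : Fin (k+1), (if b j = a then (2:ℝ) else 0))
        = ∑ j : Fin (k+1), (if Function.update α.2 α.1 a j = a then (2:ℝ) else 0) := by
    intro a
    unfold vv
    simp only [ite_mul, one_mul, zero_mul]
    rw [Finset.sum_ite_eq' Finset.univ (Function.update α.2 α.1 a)
      (fun b => ∑ j : Fin (k+1), (if b j = a then (2:ℝ) else 0))]
    simp
  simp_rw [collapse]
  rw [Finset.sum_comm]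
  have perj : ∀ j : Fin (k+1),
      (∑ a : Fin 2, if Function.update α.2 α.1 a j = a then (2:ℝ) else 0)
        = if j = α.1 then 4 else 2 := by
    intro j
    by_cases hj : j = α.1
    · subst hj
      simp [Function.update_self, Fin.sum_univ_two]
      norm_num
    · rw [if_neg hj]
      have : ∀ a : Fin 2, Function.update α.2 α.1 a j = α.2 j := by
        intro a; rw [Function.update_of_ne hj]
      simp only [this]
      rw [Finset.sum_ite_eq Finset.univ (α.2 j) (fun _ => (2:ℝ))]
      simp
  simp_rw [perj]
  have split4 : ∀ j : Fin (k+1),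
      (if j = α.1 then (4:ℝ) else 2) = 2 + (if j = α.1 then 2 else 0) := by
    intro j; split <;> norm_num
  simp_rw [split4]
  rw [Finset.sum_add_distrib, Finset.sum_const, Finset.card_univ,
    Finset.sum_ite_eq' Finset.univ α.1 (fun _ => (2:ℝ))]
  simp
  ring

/-! ### The core operator-norm inequality -/

lemma core (x : Fin 2 × (Fin (k+1) → Fin 2) → ℂ) :
    ∑ i : Fin (k+1), ∑ f : Fin (k+1) → Fin 2,
        Complex.normSq (∑ a : Fin 2, x (a, Function.update f i a))
      ≤ (2*k+4) * ∑ p, Complex.normSq (x p) := by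
  rw [show (∑ i : Fin (k+1), ∑ f : Fin (k+1) → Fin 2,
        Complex.normSq (∑ a : Fin 2, x (a, Function.update f i a)))
      = ∑ α : Fin (k+1) × (Fin (k+1) → Fin 2),
          Complex.normSq (∑ a : Fin 2, x (a, Function.update α.2 α.1 a))
    from (Fintype.sum_prod_type
      (f := fun α : Fin (k+1) × (Fin (k+1) → Fin 2) =>
        Complex.normSq (∑ a : Fin 2, x (a, Function.update α.2 α.1 a)))).symm]
  set t : (Fin (k+1) × (Fin (k+1) → Fin 2)) → ℂ :=
    fun α => ∑ a : Fin 2, x (a, Function.update α.2 α.1 a) with ht_def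
  set X := ∑ p, Complex.normSq (x p) with hX_def
  have hX0 : 0 ≤ X := Finset.sum_nonneg fun p _ => Complex.normSq_nonneg _
  set S := ∑ α : Fin (k+1) × (Fin (k+1) → Fin 2), Complex.normSq (t α) with hS_def
  have hS0 : 0 ≤ S := Finset.sum_nonneg fun α _ => Complex.normSq_nonneg _
  set u : (Fin 2 × (Fin (k+1) → Fin 2)) → ℂ :=
    fun p => ∑ α : Fin (k+1) × (Fin (k+1) → Fin 2), t α * ((vv k α p : ℝ) : ℂ) with hu_def
  have ht : ∀ α : Fin (k+1) × (Fin (k+1) → Fin 2),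
      ∑ p : Fin 2 × (Fin (k+1) → Fin 2), ((vv k α p : ℝ) : ℂ) * x p = t α := by
    intro α
    rw [Fintype.sum_prod_type, ht_def]
    apply Finset.sum_congr rfl
    intro a _
    unfold vv
    simp only [apply_ite (fun r : ℝ => (r : ℂ)), Complex.ofReal_one, Complex.ofReal_zero,
      ite_mul, one_mul, zero_mul]
    rw [Finset.sum_ite_eq' Finset.univ (Function.update α.2 α.1 a) (fun b => x (a, b))]
    simp
  have h1 : ∑ p : Fin 2 × (Fin (k+1) → Fin 2), (starRingEnd ℂ) (u p) * x p = (S : ℂ) := by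
    have expand : ∀ p, (starRingEnd ℂ) (u p)
        = ∑ α : Fin (k+1) × (Fin (k+1) → Fin 2),
            (starRingEnd ℂ) (t α) * ((vv k α p : ℝ) : ℂ) := by
      intro p
      rw [hu_def]
      rw [map_sum]
      apply Finset.sum_congr rfl
      intro α _
      rw [RingHom.map_mul, Complex.conj_ofReal]
    simp_rw [expand, Finset.sum_mul]
    rw [Finset.sum_comm]
    have : ∀ α : Fin (k+1) × (Fin (k+1) → Fin 2),
        ∑ p : Fin 2 × (Fin (k+1) → Fin 2), (starRingEnd ℂ) (t α) * ((vv k α p : ℝ) : ℂ) * x p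
          = ((Complex.normSq (t α) : ℝ) : ℂ) := by
      intro α
      calc ∑ p : Fin 2 × (Fin (k+1) → Fin 2),
            (starRingEnd ℂ) (t α) * ((vv k α p : ℝ) : ℂ) * x p
          = (starRingEnd ℂ) (t α) *
              ∑ p : Fin 2 × (Fin (k+1) → Fin 2), ((vv k α p : ℝ) : ℂ) * x p := by
            rw [Finset.mul_sum]; apply Finset.sum_congr rfl; intro p _; ring
        _ = (starRingEnd ℂ) (t α) * t α := by rw [ht α]
        _ = ((Complex.normSq (t α) : ℝ) : ℂ) := by rw [mul_comm, Complex.mul_conj]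
    simp_rw [this]
    rw [hS_def]
    push_cast
    rfl
  have hCS : S^2 ≤ (∑ p, Complex.normSq (u p)) * X := by
    have hSabs : S = ‖∑ p : Fin 2 × (Fin (k+1) → Fin 2), (starRingEnd ℂ) (u p) * x p‖ := by
      rw [h1, Complex.norm_real, Real.norm_of_nonneg hS0]
    have h2 : ‖∑ p : Fin 2 × (Fin (k+1) → Fin 2), (starRingEnd ℂ) (u p) * x p‖
        ≤ ∑ p : Fin 2 × (Fin (k+1) → Fin 2), ‖u p‖ * ‖x p‖ := by
      refine (norm_sum_le _ _).trans_eq ?_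
      apply Finset.sum_congr rfl
      intro p _
      rw [norm_mul, Complex.norm_conj]
    have h3 : (∑ p : Fin 2 × (Fin (k+1) → Fin 2), ‖u p‖ * ‖x p‖)^2
        ≤ (∑ p, ‖u p‖^2) * (∑ p, ‖x p‖^2) :=
      Finset.sum_mul_sq_le_sq_mul_sq _ _ _
    simp_rw [Complex.sq_norm] at h3
    calc S^2 = (‖∑ p : Fin 2 × (Fin (k+1) → Fin 2),
          (starRingEnd ℂ) (u p) * x p‖)^2 := by rw [← hSabs]
      _ ≤ (∑ p : Fin 2 × (Fin (k+1) → Fin 2), ‖u p‖ * ‖x p‖)^2 := by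
          apply pow_le_pow_left₀ (norm_nonneg _) h2
      _ ≤ (∑ p, Complex.normSq (u p)) * X := h3
  have hGram : (∑ p, Complex.normSq (u p)) ≤ (2*k+4) * S := by
    have hub : ∀ p, Complex.normSq (u p)
        ≤ (∑ α : Fin (k+1) × (Fin (k+1) → Fin 2), ‖t α‖ * vv k α p)^2 := by
      intro p
      rw [← Complex.sq_norm]
      apply pow_le_pow_left₀ (norm_nonneg _)
      refine (norm_sum_le _ _).trans_eq ?_
      apply Finset.sum_congr rfl
      intro α _
      rw [norm_mul, Complex.norm_real, Real.norm_of_nonneg (vv_nonneg α p)]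
    have step : ∑ p, Complex.normSq (u p)
        ≤ ∑ p : Fin 2 × (Fin (k+1) → Fin 2),
            (∑ α : Fin (k+1) × (Fin (k+1) → Fin 2), ‖t α‖ * vv k α p)^2 :=
      Finset.sum_le_sum fun p _ => hub p
    refine step.trans ?_
    have expand2 : ∀ p : Fin 2 × (Fin (k+1) → Fin 2),
        (∑ α : Fin (k+1) × (Fin (k+1) → Fin 2), ‖t α‖ * vv k α p)^2
          = ∑ α : Fin (k+1) × (Fin (k+1) → Fin 2), ∑ β : Fin (k+1) × (Fin (k+1) → Fin 2),
              ‖t α‖ * ‖t β‖ * (vv k α p * vv k β p) := by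
      intro p
      rw [sq, Finset.sum_mul_sum]
      apply Finset.sum_congr rfl; intro α _
      apply Finset.sum_congr rfl; intro β _
      ring
    simp_rw [expand2]
    rw [Finset.sum_comm]
    have swap2 : ∀ α : Fin (k+1) × (Fin (k+1) → Fin 2),
        (∑ p : Fin 2 × (Fin (k+1) → Fin 2), ∑ β : Fin (k+1) × (Fin (k+1) → Fin 2),
            ‖t α‖ * ‖t β‖ * (vv k α p * vv k β p))
          = ∑ β : Fin (k+1) × (Fin (k+1) → Fin 2),
              ‖t α‖ * ‖t β‖ * (∑ p, vv k α p * vv k β p) := by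
      intro α
      rw [Finset.sum_comm]
      apply Finset.sum_congr rfl; intro β _
      rw [Finset.mul_sum]
    simp_rw [swap2]
    have hbound : ∀ (α β : Fin (k+1) × (Fin (k+1) → Fin 2)),
        ‖t α‖ * ‖t β‖ * (∑ p, vv k α p * vv k β p)
          ≤ (Complex.normSq (t α) + Complex.normSq (t β))/2 * (∑ p, vv k α p * vv k β p) := by
      intro α β
      apply mul_le_mul_of_nonneg_right
      · rw [← Complex.sq_norm, ← Complex.sq_norm]
        nlinarith [sq_nonneg (‖t α‖ - ‖t β‖),
          norm_nonneg (t α), norm_nonneg (t β)]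
      · exact Finset.sum_nonneg fun p _ => mul_nonneg (vv_nonneg α p) (vv_nonneg β p)
    refine (Finset.sum_le_sum fun α _ => Finset.sum_le_sum fun β _ => hbound α β).trans ?_
    have split : ∀ (α β : Fin (k+1) × (Fin (k+1) → Fin 2)),
        (Complex.normSq (t α) + Complex.normSq (t β))/2 * (∑ p, vv k α p * vv k β p)
          = Complex.normSq (t α)/2 * (∑ p, vv k α p * vv k β p)
            + Complex.normSq (t β)/2 * (∑ p, vv k β p * vv k α p) := by
      intro α β
      have : (∑ p, vv k α p * vv k β p) = (∑ p, vv k β p * vv k α p) := by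
        apply Finset.sum_congr rfl; intro p _; ring
      rw [← this]; ring
    simp_rw [split, Finset.sum_add_distrib]
    have first : ∀ α : Fin (k+1) × (Fin (k+1) → Fin 2),
        ∑ β : Fin (k+1) × (Fin (k+1) → Fin 2),
            Complex.normSq (t α)/2 * (∑ p, vv k α p * vv k β p)
          = Complex.normSq (t α)/2 * (2*k+4) := by
      intro α
      rw [← Finset.mul_sum, vv_rowsum α]
    have second : (∑ α : Fin (k+1) × (Fin (k+1) → Fin 2),
          ∑ β : Fin (k+1) × (Fin (k+1) → Fin 2),
            Complex.normSq (t β)/2 * (∑ p, vv k β p * vv k α p))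
          = ∑ β : Fin (k+1) × (Fin (k+1) → Fin 2), Complex.normSq (t β)/2 * (2*k+4) := by
      rw [Finset.sum_comm]
      apply Finset.sum_congr rfl
      intro β _
      rw [← Finset.mul_sum, vv_rowsum β]
    rw [second]
    simp_rw [first]
    rw [← Finset.sum_add_distrib]
    have comb : ∀ α : Fin (k+1) × (Fin (k+1) → Fin 2),
        Complex.normSq (t α)/2 * (2*(k:ℝ)+4) + Complex.normSq (t α)/2 * (2*(k:ℝ)+4)
          = (2*(k:ℝ)+4) * Complex.normSq (t α) := by
      intro α; ring
    simp_rw [comb]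
    rw [← Finset.mul_sum, ← hS_def]
  rcases eq_or_lt_of_le hS0 with hS | hS
  · rw [← hS]
    positivity
  · nlinarith [hCS, hGram, hX0, hS]

end Stmt6Aux
namespace Stmt6Aux

variable {k : ℕ}

/-! ### Reduction lemmas -/

lemma trace_red (M : Matrix (Fin 2 × (Fin (k+1) → Fin 2)) (Fin 2 × (Fin (k+1) → Fin 2)) ℂ)
    (i : Fin (k+1)) : (red k M i).trace = M.trace := by
  have expand : (red k M i).trace
      = ∑ a : Fin 2, ∑ s : Fin 2, (2:ℂ)⁻¹ *
          ∑ f : Fin (k+1) → Fin 2, M (a, Function.update f i s) (a, Function.update f i s) := by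
    rw [Matrix.trace, Fintype.sum_prod_type]
    apply Finset.sum_congr rfl; intro a _
    apply Finset.sum_congr rfl; intro s _
    simp [red, Matrix.diag]
  rw [expand]
  have step : ∀ a s : Fin 2,
      (∑ f : Fin (k+1) → Fin 2, M (a, Function.update f i s) (a, Function.update f i s))
        = ∑ x : Fin 2, ∑ f : Fin (k+1) → Fin 2, (if f i = s then M (a, f) (a, f) else 0) :=
    fun a s => sum_update_eq (fun f => M (a, f) (a, f)) i s
  simp_rw [step, Finset.sum_const, Finset.card_univ, Fintype.card_fin, nsmul_eq_mul,
    Nat.cast_ofNat]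
  have cancel : ∀ z : ℂ, (2:ℂ)⁻¹ * ((2:ℂ) * z) = z := by
    intro z; rw [← mul_assoc, inv_mul_cancel₀ (by norm_num : (2:ℂ) ≠ 0), one_mul]
  simp_rw [cancel]
  rw [Matrix.trace, Fintype.sum_prod_type]
  apply Finset.sum_congr rfl; intro a _
  rw [Finset.sum_comm]
  apply Finset.sum_congr rfl; intro f _
  rw [Finset.sum_ite_eq, if_pos (Finset.mem_univ _)]
  rfl

set_option maxHeartbeats 1000000 in
lemma red_posSemidef (M : Matrix (Fin 2 × (Fin (k+1) → Fin 2)) (Fin 2 × (Fin (k+1) → Fin 2)) ℂ)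
    (hM : M.PosSemidef) (i : Fin (k+1)) : (red k M i).PosSemidef := by
  classical
  set c : ℂ := (((Real.sqrt 2)⁻¹ : ℝ) : ℂ) with hc
  have hcc : c * c = (2:ℂ)⁻¹ := by
    rw [hc, ← Complex.ofReal_mul, ← mul_inv, Real.mul_self_sqrt (by norm_num : (0:ℝ) ≤ 2)]
    norm_num
  have hcstar : star c = c := by rw [hc, Complex.star_def, Complex.conj_ofReal]
  set D : (Fin (k+1) → Fin 2) → Matrix (Fin 2 × (Fin (k+1) → Fin 2)) (Fin 2 × Fin 2) ℂ :=
    fun f => Matrix.of fun P p => if P = (p.1, Function.update f i p.2) then c else 0 with hD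
  have entry : ∀ f (p q : Fin 2 × Fin 2),
      ((D f)ᴴ * M * (D f)) p q
        = (2:ℂ)⁻¹ * M (p.1, Function.update f i p.2) (q.1, Function.update f i q.2) := by
    intro f p q
    rw [Matrix.mul_apply]
    have inner1 : ∀ Q, ((D f)ᴴ * M) p Q = c * M (p.1, Function.update f i p.2) Q := by
      intro Q
      rw [Matrix.mul_apply]
      have : ∀ P, (D f)ᴴ p P * M P Q
          = if P = (p.1, Function.update f i p.2) then c * M P Q else 0 := by
        intro P
        rw [Matrix.conjTranspose_apply, hD]
        simp only [Matrix.of_apply]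
        split
        · simp [hcstar]
        · simp
      simp_rw [this]
      rw [Finset.sum_ite_eq' Finset.univ ((p.1, Function.update f i p.2))
        (fun P => c * M P Q), if_pos (Finset.mem_univ _)]
    simp_rw [inner1, hD]
    simp only [Matrix.of_apply]
    have : ∀ Q, c * M (p.1, Function.update f i p.2) Q *
        (if Q = (q.1, Function.update f i q.2) then c else 0)
          = if Q = (q.1, Function.update f i q.2) then
              c * M (p.1, Function.update f i p.2) Q * c else 0 := by
      intro Q; split <;> simp
    simp_rw [this]
    rw [Finset.sum_ite_eq' Finset.univ ((q.1, Function.update f i q.2))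
      (fun Q => c * M (p.1, Function.update f i p.2) Q * c), if_pos (Finset.mem_univ _)]
    rw [← hcc]; ring
  have red_eq : red k M i = ∑ f : Fin (k+1) → Fin 2, (D f)ᴴ * M * (D f) := by
    ext p q
    rw [Matrix.sum_apply]
    simp_rw [entry]
    simp only [red, Matrix.of_apply, Fintype.card_fin, Nat.cast_ofNat]
    rw [Finset.mul_sum]
  rw [red_eq]
  apply Finset.sum_induction _ _ (fun A B (hA : Matrix.PosSemidef A) hB => hA.add hB)
  · exact Matrix.PosSemidef.zero
  · intro f _
    exact hM.conjTranspose_mul_mul_same (D f)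

lemma trace_red_phiPlus
    (M : Matrix (Fin 2 × (Fin (k+1) → Fin 2)) (Fin 2 × (Fin (k+1) → Fin 2)) ℂ)
    (i : Fin (k+1)) :
    (red k M i * phiPlus 2).trace
      = (4:ℂ)⁻¹ * ∑ f : Fin (k+1) → Fin 2, ∑ a : Fin 2, ∑ a' : Fin 2,
          M (a, Function.update f i a) (a', Function.update f i a') := by
  have h1 : (red k M i * phiPlus 2).trace
      = ∑ p : Fin 2 × Fin 2, ∑ q : Fin 2 × Fin 2,
          (red k M i) p q * phiPlus 2 q p := by
    rw [Matrix.trace]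
    apply Finset.sum_congr rfl; intro p _
    rw [Matrix.diag, Matrix.mul_apply]
  rw [h1]
  have h2 : ∀ p q : Fin 2 × Fin 2, (red k M i) p q * phiPlus 2 q p
      = if q.1 = q.2 ∧ p.1 = p.2 then (red k M i) p q * (1/2 : ℂ) else 0 := by
    intro p q
    simp only [phiPlus, Matrix.of_apply]
    by_cases hq : q.1 = q.2 ∧ p.1 = p.2
    · rw [if_pos hq, if_pos hq]
      norm_num
    · rw [if_neg hq, if_neg hq, mul_zero]
  simp_rw [h2]
  have h3 : ∑ p : Fin 2 × Fin 2, ∑ q : Fin 2 × Fin 2,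
      (if q.1 = q.2 ∧ p.1 = p.2 then (red k M i) p q * (1/2:ℂ) else 0)
      = ∑ a : Fin 2, ∑ a' : Fin 2, (red k M i) (a,a) (a',a') * (1/2:ℂ) := by
    rw [Fintype.sum_prod_type]
    rw [show (∑ a1 : Fin 2, ∑ a2 : Fin 2, ∑ q : Fin 2 × Fin 2,
        (if q.1 = q.2 ∧ (a1, a2).1 = (a1, a2).2 then (red k M i) (a1,a2) q * (1/2:ℂ) else 0))
      = ∑ a1 : Fin 2, ∑ a2 : Fin 2, ∑ b1 : Fin 2, ∑ b2 : Fin 2,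
        (if b1 = b2 ∧ a1 = a2 then (red k M i) (a1,a2) (b1,b2) * (1/2:ℂ) else 0) from by
        apply Finset.sum_congr rfl; intro a1 _
        apply Finset.sum_congr rfl; intro a2 _
        rw [Fintype.sum_prod_type]]
    apply Finset.sum_congr rfl; intro a1 _
    simp only [ite_and]
    rw [show (∑ a2 : Fin 2, ∑ b1 : Fin 2, ∑ b2 : Fin 2,
        (if b1 = b2 then if a1 = a2 then (red k M i) (a1,a2) (b1,b2) * (1/2:ℂ) else 0 else 0))
      = ∑ a2 : Fin 2, (if a1 = a2 then ∑ b1 : Fin 2, (red k M i) (a1,a2) (b1,b1) * (1/2:ℂ) else 0)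
      from by
        apply Finset.sum_congr rfl; intro a2 _
        by_cases ha : a1 = a2
        · simp only [if_pos ha]
          apply Finset.sum_congr rfl; intro b1 _
          rw [Finset.sum_ite_eq Finset.univ b1
            (fun b2 => (red k M i) (a1,a2) (b1,b2) * (1/2:ℂ)), if_pos (Finset.mem_univ _)]
        · simp only [if_neg ha]
          simp]
    rw [Finset.sum_ite_eq Finset.univ a1
      (fun a2 => ∑ b1 : Fin 2, (red k M i) (a1,a2) (b1,b1) * (1/2:ℂ)),
      if_pos (Finset.mem_univ _)]
  rw [h3]
  simp only [red, Matrix.of_apply, Fintype.card_fin, Nat.cast_ofNat]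
  calc ∑ a : Fin 2, ∑ a' : Fin 2,
        ((2:ℂ)⁻¹ * ∑ f : Fin (k+1) → Fin 2,
          M (a, Function.update f i a) (a', Function.update f i a')) * (1/2:ℂ)
      = ∑ a : Fin 2, ∑ a' : Fin 2, ∑ f : Fin (k+1) → Fin 2,
          (4:ℂ)⁻¹ * M (a, Function.update f i a) (a', Function.update f i a') := by
        apply Finset.sum_congr rfl; intro a _
        apply Finset.sum_congr rfl; intro a' _
        rw [Finset.mul_sum, Finset.sum_mul]
        apply Finset.sum_congr rfl; intro f _
        ring
    _ = ∑ f : Fin (k+1) → Fin 2, ∑ a : Fin 2, ∑ a' : Fin 2,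
          (4:ℂ)⁻¹ * M (a, Function.update f i a) (a', Function.update f i a') := by
        rw [show (∑ a : Fin 2, ∑ a' : Fin 2, ∑ f : Fin (k+1) → Fin 2,
            (4:ℂ)⁻¹ * M (a, Function.update f i a) (a', Function.update f i a'))
          = ∑ a : Fin 2, ∑ f : Fin (k+1) → Fin 2, ∑ a' : Fin 2,
            (4:ℂ)⁻¹ * M (a, Function.update f i a) (a', Function.update f i a') from
          Finset.sum_congr rfl fun a _ => Finset.sum_comm]
        exact Finset.sum_comm
    _ = (4:ℂ)⁻¹ * ∑ f : Fin (k+1) → Fin 2, ∑ a : Fin 2, ∑ a' : Fin 2,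
          M (a, Function.update f i a) (a', Function.update f i a') := by
        rw [Finset.mul_sum]
        apply Finset.sum_congr rfl; intro f _
        rw [Finset.mul_sum]
        apply Finset.sum_congr rfl; intro a _
        rw [Finset.mul_sum]

end Stmt6Aux
namespace Stmt6Aux

variable {k : ℕ}

/-! ### The optimal state -/

noncomputable def psiR (k : ℕ) (p : Fin 2 × (Fin (k+1) → Fin 2)) : ℝ :=
  ∑ i : Fin (k+1), if p.2 = Function.update (fun _ => (0:Fin 2)) i p.1 then 1 else 0

noncomputable def sig (k : ℕ) :
    Matrix (Fin 2 × (Fin (k+1) → Fin 2)) (Fin 2 × (Fin (k+1) → Fin 2)) ℂ :=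
  Matrix.of fun p q =>
    ((((((k:ℝ)+1) * ((k:ℝ)+2))⁻¹ * (psiR k p * psiR k q)) : ℝ) : ℂ)

lemma updEq (a : Fin 2) (i j : Fin (k+1)) :
    (Function.update (fun _ => (0:Fin 2)) i a = Function.update (fun _ => (0:Fin 2)) j a)
      ↔ (a = 0 ∨ i = j) := by
  constructor
  · intro h
    by_cases hij : i = j
    · right; exact hij
    · left
      have := congrFun h i
      rw [Function.update_self, Function.update_of_ne hij] at this
      exact this
  · rintro (rfl | rfl)
    · funext l
      by_cases hl1 : l = i <;> by_cases hl2 : l = j <;>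
        simp [hl1, hl2, Function.update_apply]
    · rfl

lemma psi_norm : ∑ p : Fin 2 × (Fin (k+1) → Fin 2), psiR k p * psiR k p
    = ((k:ℝ)+1) * ((k:ℝ)+2) := by
  unfold psiR
  rw [Fintype.sum_prod_type]
  have perab : ∀ a : Fin 2,
      (∑ b : Fin (k+1) → Fin 2,
        (∑ i : Fin (k+1), if b = Function.update (fun _ => (0:Fin 2)) i a then (1:ℝ) else 0) *
        (∑ j : Fin (k+1), if b = Function.update (fun _ => (0:Fin 2)) j a then (1:ℝ) else 0))
      = ∑ i : Fin (k+1), ∑ j : Fin (k+1), (if a = 0 ∨ i = j then (1:ℝ) else 0) := by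
    intro a
    simp_rw [Finset.sum_mul_sum]
    rw [Finset.sum_comm]
    apply Finset.sum_congr rfl; intro i _
    rw [Finset.sum_comm]
    apply Finset.sum_congr rfl; intro j _
    simp_rw [ite_mul, one_mul, zero_mul]
    rw [Finset.sum_ite_eq' Finset.univ (Function.update (fun _ => (0:Fin 2)) i a)
      (fun b => if b = Function.update (fun _ => (0:Fin 2)) j a then (1:ℝ) else 0),
      if_pos (Finset.mem_univ _)]
    exact if_congr (updEq a i j) rfl rfl
  simp_rw [perab]
  rw [Fin.sum_univ_two]
  have h0 : ∑ i : Fin (k+1), ∑ j : Fin (k+1), (if (0:Fin 2) = 0 ∨ i = j then (1:ℝ) else 0)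
      = ((k:ℝ)+1) * ((k:ℝ)+1) := by
    simp
    try push_cast
    try ring
  have h1 : ∑ i : Fin (k+1), ∑ j : Fin (k+1), (if (1:Fin 2) = 0 ∨ i = j then (1:ℝ) else 0)
      = (k:ℝ)+1 := by
    have : ∀ i j : Fin (k+1), ((1:Fin 2) = 0 ∨ i = j) ↔ (i = j) := by
      intro i j
      constructor
      · rintro (h | h)
        · exact absurd h one_ne_zero
        · exact h
      · exact Or.inr
    simp_rw [this]
    simp [Finset.sum_ite_eq]
  rw [h0, h1]
  ring

lemma psi_symm (e : Equiv.Perm (Fin (k+1))) (a : Fin 2) (b : Fin (k+1) → Fin 2) :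
    psiR k (a, b ∘ ⇑e) = psiR k (a, b) := by
  unfold psiR
  have hcond : ∀ j, ((b ∘ ⇑e = Function.update (fun _ => (0:Fin 2)) j a)
      ↔ (b = Function.update (fun _ => (0:Fin 2)) (e j) a)) := by
    intro j
    constructor
    · intro h
      funext l
      have hl0 := congrFun h (e.symm l)
      simp only [Function.comp_apply, Equiv.apply_symm_apply] at hl0
      rw [hl0, Function.update_apply, Function.update_apply]
      by_cases hl : l = e j
      · rw [if_pos (by rw [hl, Equiv.symm_apply_apply]), if_pos hl]
      · rw [if_neg (fun hc => hl (by rw [← Equiv.apply_symm_apply e l, hc])),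
          if_neg hl]
    · intro h
      funext l
      simp only [Function.comp_apply]
      rw [h, Function.update_apply, Function.update_apply]
      by_cases hl : l = j
      · rw [if_pos (by rw [hl]), if_pos hl]
      · rw [if_neg (fun hc => hl (e.injective hc)), if_neg hl]
  show (∑ j : Fin (k+1), if b ∘ ⇑e = Function.update (fun _ => (0:Fin 2)) j a then (1:ℝ) else 0)
      = ∑ j : Fin (k+1), if b = Function.update (fun _ => (0:Fin 2)) j a then (1:ℝ) else 0
  simp_rw [hcond]
  exact Fintype.sum_equiv e _ _ (fun j => rfl)

lemma sig_posSemidef : (sig k).PosSemidef := by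
  classical
  set s : ℝ := (Real.sqrt (((k:ℝ)+1) * ((k:ℝ)+2)))⁻¹ with hs
  set B : Matrix (Fin 1) (Fin 2 × (Fin (k+1) → Fin 2)) ℂ :=
    Matrix.of fun _ p => ((s * psiR k p : ℝ) : ℂ) with hB
  have harg : (0:ℝ) ≤ ((k:ℝ)+1) * ((k:ℝ)+2) := by positivity
  have hss : s * s = (((k:ℝ)+1) * ((k:ℝ)+2))⁻¹ := by
    rw [hs, ← mul_inv, Real.mul_self_sqrt harg]
  have : sig k = Bᴴ * B := by
    ext p q
    rw [Matrix.mul_apply]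
    rw [Fin.sum_univ_one]
    rw [Matrix.conjTranspose_apply, hB]
    simp only [Matrix.of_apply]
    rw [Complex.star_def, Complex.conj_ofReal, sig]
    simp only [Matrix.of_apply]
    rw [← Complex.ofReal_mul]
    congr 1
    rw [← hss]
    ring
  rw [this]
  exact Matrix.posSemidef_conjTranspose_mul_self B

lemma sig_trace : (sig k).trace = 1 := by
  rw [Matrix.trace]
  have : ∀ p : Fin 2 × (Fin (k+1) → Fin 2), (sig k).diag p
      = (((((k:ℝ)+1) * ((k:ℝ)+2))⁻¹ * (psiR k p * psiR k p) : ℝ) : ℂ) := by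
    intro p; rfl
  simp_rw [this]
  rw [← Complex.ofReal_sum]
  rw [show (∑ p : Fin 2 × (Fin (k+1) → Fin 2),
      ((((k:ℝ)+1) * ((k:ℝ)+2))⁻¹ * (psiR k p * psiR k p)))
    = (((k:ℝ)+1) * ((k:ℝ)+2))⁻¹ * ∑ p : Fin 2 × (Fin (k+1) → Fin 2),
        (psiR k p * psiR k p) from (Finset.mul_sum _ _ _).symm]
  rw [psi_norm, inv_mul_cancel₀ (by positivity : (((k:ℝ)+1) * ((k:ℝ)+2)) ≠ 0)]
  norm_num

lemma sig_red_symm (i : Fin (k+1)) : red k (sig k) i = red k (sig k) 0 := by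
  ext p q
  simp only [red, Matrix.of_apply]
  congr 1
  set e : Equiv.Perm (Fin (k+1)) := Equiv.swap (0 : Fin (k+1)) i with he
  have hupd : ∀ (f : Fin (k+1) → Fin 2) (t : Fin 2),
      Function.update (f ∘ ⇑e) i t = (Function.update f 0 t) ∘ ⇑e := by
    intro f t
    rw [Function.update_comp_equiv]
    congr 1
    try rw [he, Equiv.symm_swap, Equiv.swap_apply_left]
  have hterm : ∀ f : Fin (k+1) → Fin 2,
      sig k (p.1, Function.update f 0 p.2) (q.1, Function.update f 0 q.2)
        = sig k (p.1, Function.update (f ∘ ⇑e) i p.2) (q.1, Function.update (f ∘ ⇑e) i q.2) := by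
    intro f
    rw [hupd, hupd]
    show ((((((k:ℝ)+1) * ((k:ℝ)+2))⁻¹ *
        (psiR k (p.1, Function.update f 0 p.2) * psiR k (q.1, Function.update f 0 q.2))) : ℝ) : ℂ)
      = ((((((k:ℝ)+1) * ((k:ℝ)+2))⁻¹ *
        (psiR k (p.1, (Function.update f 0 p.2) ∘ ⇑e) *
          psiR k (q.1, (Function.update f 0 q.2) ∘ ⇑e))) : ℝ) : ℂ)
    rw [psi_symm e, psi_symm e]
  have hbij : Function.Bijective (fun f : Fin (k+1) → Fin 2 => f ∘ ⇑e) := by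
    have : Function.Involutive (fun f : Fin (k+1) → Fin 2 => f ∘ ⇑e) := by
      intro f; funext l
      simp [he, Equiv.swap_apply_self]
    exact this.bijective
  exact (Fintype.sum_bijective _ hbij _ _ hterm).symm

lemma condT (f : Fin (k+1) → Fin 2) (a : Fin 2) (i : Fin (k+1)) :
    (Function.update f 0 a = Function.update (fun _ => (0:Fin 2)) i a)
      ↔ ((∀ j, j ≠ 0 → f j = 0) ∧ (a = 0 ∨ i = 0)) := by
  constructor
  · intro h
    by_cases hi : i = 0
    · subst hi
      constructor
      · intro j hj
        have := congrFun h j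
        rw [Function.update_of_ne hj, Function.update_of_ne hj] at this
        exact this
      · right; rfl
    · have ha : a = 0 := by
        have := congrFun h 0
        rw [Function.update_self, Function.update_of_ne (Ne.symm hi)] at this
        exact this
      subst ha
      constructor
      · intro j hj
        have := congrFun h j
        rw [Function.update_of_ne hj] at this
        rw [this, Function.update_apply]
        split <;> rfl
      · left; rfl
  · rintro ⟨hA, hB⟩
    funext j
    by_cases hj : j = 0
    · subst hj
      rw [Function.update_self]
      rcases hB with rfl | rfl
      · rw [Function.update_apply]
        split <;> rfl
      · rw [Function.update_self]
    · rw [Function.update_of_ne hj, hA j hj, Function.update_apply]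
      rcases hB with rfl | rfl
      · split <;> rfl
      · rw [if_neg hj]

lemma Tval (f : Fin (k+1) → Fin 2) :
    (∑ a : Fin 2, psiR k (a, Function.update f 0 a))
      = if (∀ j, j ≠ 0 → f j = (0:Fin 2)) then (k:ℝ)+2 else 0 := by
  unfold psiR
  have : ∀ (a : Fin 2) (i : Fin (k+1)),
      ((a, Function.update f 0 a).2 = Function.update (fun _ => (0:Fin 2)) i (a, Function.update f 0 a).1)
        = (((∀ j, j ≠ 0 → f j = (0:Fin 2)) ∧ (a = 0 ∨ i = 0))) := by
    intro a i
    exact propext (condT f a i)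
  simp_rw [this, ite_and]
  by_cases hP : ∀ j, j ≠ 0 → f j = (0:Fin 2)
  · simp only [if_pos hP]
    rw [Fin.sum_univ_two]
    have e0 : ∑ i : Fin (k+1), (if (0:Fin 2) = 0 ∨ i = 0 then (1:ℝ) else 0) = (k:ℝ)+1 := by
      simp
    have e1 : ∑ i : Fin (k+1), (if (1:Fin 2) = 0 ∨ i = 0 then (1:ℝ) else 0) = 1 := by
      have : ∀ i : Fin (k+1), ((1:Fin 2) = 0 ∨ i = 0) ↔ (i = 0) := by
        intro i
        constructor
        · rintro (h | h)
          · exact absurd h one_ne_zero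
          · exact h
        · exact Or.inr
      simp_rw [this]
      rw [Finset.sum_ite_eq' Finset.univ (0 : Fin (k+1)) (fun _ => (1:ℝ)),
        if_pos (Finset.mem_univ _)]
    rw [e0, e1]
    ring
  · simp only [if_neg hP, Finset.sum_const_zero]
    try rw [Fin.sum_univ_two]
    try norm_num

lemma count2 : ∑ f : Fin (k+1) → Fin 2,
    (if (∀ j, j ≠ 0 → f j = (0:Fin 2)) then (1:ℝ) else 0) = 2 := by
  have hiff : ∀ f : Fin (k+1) → Fin 2,
      ((∀ j, j ≠ 0 → f j = (0:Fin 2)))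
        = (f = Function.update (fun _ => (0:Fin 2)) 0 (f 0)) := by
    intro f
    rw [Function.eq_update_iff]
    simp
  simp_rw [hiff]
  rw [sum_update_self (fun _ => (0:Fin 2)) 0 (fun _ => (1:ℝ))]
  simp

lemma sig_value : ((red k (sig k) 0 * phiPlus 2).trace)
    = ((((k:ℝ)+2) / (2*((k:ℝ)+1))) : ℂ) := by
  rw [trace_red_phiPlus]
  have inner : ∀ f : Fin (k+1) → Fin 2,
      (∑ a : Fin 2, ∑ a' : Fin 2,
        sig k (a, Function.update f 0 a) (a', Function.update f 0 a'))
      = (((((k:ℝ)+1) * ((k:ℝ)+2))⁻¹ *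
          ((∑ a : Fin 2, psiR k (a, Function.update f 0 a)) *
           (∑ a' : Fin 2, psiR k (a', Function.update f 0 a'))) : ℝ) : ℂ) := by
    intro f
    rw [Finset.sum_mul_sum]
    push_cast
    rw [Finset.mul_sum]
    apply Finset.sum_congr rfl; intro a _
    rw [Finset.mul_sum]
    apply Finset.sum_congr rfl; intro a' _
    show ((((((k:ℝ)+1) * ((k:ℝ)+2))⁻¹ *
        (psiR k (a, Function.update f 0 a) * psiR k (a', Function.update f 0 a'))) : ℝ) : ℂ) = _
    push_cast
    ring
  simp_rw [inner, Tval]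
  rw [← Complex.ofReal_sum]
  have : (∑ f : Fin (k+1) → Fin 2,
      ((((k:ℝ)+1) * ((k:ℝ)+2))⁻¹ *
        ((if (∀ j, j ≠ 0 → f j = (0:Fin 2)) then (k:ℝ)+2 else 0) *
         (if (∀ j, j ≠ 0 → f j = (0:Fin 2)) then (k:ℝ)+2 else 0))))
      = ((((k:ℝ)+1) * ((k:ℝ)+2))⁻¹ * (((k:ℝ)+2)*((k:ℝ)+2)) * 2) := by
    have perf : ∀ f : Fin (k+1) → Fin 2,
        ((((k:ℝ)+1) * ((k:ℝ)+2))⁻¹ *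
          ((if (∀ j, j ≠ 0 → f j = (0:Fin 2)) then (k:ℝ)+2 else 0) *
           (if (∀ j, j ≠ 0 → f j = (0:Fin 2)) then (k:ℝ)+2 else 0)))
        = ((((k:ℝ)+1) * ((k:ℝ)+2))⁻¹ * (((k:ℝ)+2)*((k:ℝ)+2))) *
            (if (∀ j, j ≠ 0 → f j = (0:Fin 2)) then (1:ℝ) else 0) := by
      intro f
      split <;> ring
    simp_rw [perf]
    rw [← Finset.mul_sum, count2]
  rw [this]
  have harith : (4:ℝ)⁻¹ * (((((k:ℝ)+1) * ((k:ℝ)+2))⁻¹ * (((k:ℝ)+2)*((k:ℝ)+2)) * 2))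
      = ((k:ℝ)+2) / (2*((k:ℝ)+1)) := by
    have h1 : ((k:ℝ)+1) ≠ 0 := by positivity
    have h2 : ((k:ℝ)+2) ≠ 0 := by positivity
    field_simp
    ring
  rw [show ((4:ℂ)⁻¹ * (((((((k:ℝ)+1) * ((k:ℝ)+2))⁻¹ * (((k:ℝ)+2)*((k:ℝ)+2)) * 2)) : ℝ) : ℂ))
      = ((((4:ℝ)⁻¹ * (((((k:ℝ)+1) * ((k:ℝ)+2))⁻¹ * (((k:ℝ)+2)*((k:ℝ)+2)) * 2))) : ℝ) : ℂ) from by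
    push_cast
    ring]
  rw [harith]
  push_cast
  ring

end Stmt6Aux
/-- the maximal overlap `tr(σΦ⁺)` of a `k`-extendible two-qubit state σ
with the maximally entangled state equals `(k+2)/(2(k+1))`; for `k = 1` this is `3/4`. -/
theorem stmt6 (k : ℕ) :
    IsGreatest {r : ℝ | ∃ σ : Matrix (Fin 2 × Fin 2) (Fin 2 × Fin 2) ℂ,
        σ.PosSemidef ∧ σ.trace = 1 ∧ kExtendible k σ ∧ r = ((σ * phiPlus 2).trace).re}
      ((k + 2) / (2 * (k + 1))) ∧
    ((1 + 2 : ℝ) / (2 * (1 + 1)) = 3 / 4) := by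
  constructor
  · constructor
    · -- membership : the optimal state
      refine ⟨red k (Stmt6Aux.sig k) 0, ?_, ?_, ?_, ?_⟩
      · exact Stmt6Aux.red_posSemidef _ Stmt6Aux.sig_posSemidef 0
      · rw [Stmt6Aux.trace_red, Stmt6Aux.sig_trace]
      · exact ⟨Stmt6Aux.sig k, Stmt6Aux.sig_posSemidef, Stmt6Aux.sig_trace,
          fun i => Stmt6Aux.sig_red_symm i⟩
      · rw [Stmt6Aux.sig_value]
        norm_cast
    · -- upper bound
      rintro r ⟨σ, hσP, hσtr, ⟨σ'', hP, htr, hred⟩, rfl⟩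
      obtain ⟨B, hB⟩ : ∃ B, σ'' = Bᴴ * B := by
          open scoped MatrixOrder in
          obtain ⟨B, hB⟩ := CStarAlgebra.nonneg_iff_eq_star_mul_self.mp hP.nonneg
          exact ⟨B, hB⟩
      have hentry : ∀ p q, σ'' p q
          = ∑ s : Fin 2 × (Fin (k+1) → Fin 2), star (B s p) * B s q := by
        intro p q
        rw [hB, Matrix.mul_apply]
        apply Finset.sum_congr rfl
        intro s _
        rw [Matrix.conjTranspose_apply]
      have keyi : ∀ i : Fin (k+1), ((σ * phiPlus 2).trace)
          = ((((4:ℝ)⁻¹ * ∑ s : Fin 2 × (Fin (k+1) → Fin 2), ∑ f : Fin (k+1) → Fin 2,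
              Complex.normSq (∑ a : Fin 2, B s (a, Function.update f i a))) : ℝ) : ℂ) := by
        intro i
        rw [← hred i, Stmt6Aux.trace_red_phiPlus]
        have hf : ∀ f : Fin (k+1) → Fin 2,
            (∑ a : Fin 2, ∑ a' : Fin 2,
              σ'' (a, Function.update f i a) (a', Function.update f i a'))
            = ∑ s : Fin 2 × (Fin (k+1) → Fin 2),
                ((Complex.normSq (∑ a : Fin 2, B s (a, Function.update f i a)) : ℝ) : ℂ) := by
          intro f
          simp_rw [hentry]
          rw [show (∑ a : Fin 2, ∑ a' : Fin 2, ∑ s : Fin 2 × (Fin (k+1) → Fin 2),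
              star (B s (a, Function.update f i a)) * B s (a', Function.update f i a'))
            = ∑ a : Fin 2, ∑ s : Fin 2 × (Fin (k+1) → Fin 2), ∑ a' : Fin 2,
              star (B s (a, Function.update f i a)) * B s (a', Function.update f i a') from
            Finset.sum_congr rfl fun a _ => Finset.sum_comm]
          rw [Finset.sum_comm]
          apply Finset.sum_congr rfl
          intro s _
          rw [← Finset.sum_mul_sum]
          rw [show (∑ a : Fin 2, star (B s (a, Function.update f i a)))
            = star (∑ a : Fin 2, B s (a, Function.update f i a)) from (star_sum _ _).symm]
          rw [mul_comm, Complex.star_def, Complex.mul_conj]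
        simp_rw [hf]
        rw [Finset.sum_comm]
        rw [show (∑ s : Fin 2 × (Fin (k+1) → Fin 2), ∑ f : Fin (k+1) → Fin 2,
            ((Complex.normSq (∑ a : Fin 2, B s (a, Function.update f i a)) : ℝ) : ℂ))
          = (((∑ s : Fin 2 × (Fin (k+1) → Fin 2), ∑ f : Fin (k+1) → Fin 2,
            Complex.normSq (∑ a : Fin 2, B s (a, Function.update f i a))) : ℝ) : ℂ) from by
          push_cast; rfl]
        push_cast
        ring
      have trace1 : (∑ s : Fin 2 × (Fin (k+1) → Fin 2),
          ∑ p : Fin 2 × (Fin (k+1) → Fin 2), Complex.normSq (B s p)) = 1 := by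
        have h1 : σ''.trace = (((∑ s : Fin 2 × (Fin (k+1) → Fin 2),
            ∑ p : Fin 2 × (Fin (k+1) → Fin 2), Complex.normSq (B s p)) : ℝ) : ℂ) := by
          rw [Matrix.trace]
          have hd : ∀ p : Fin 2 × (Fin (k+1) → Fin 2), σ''.diag p
              = ∑ s : Fin 2 × (Fin (k+1) → Fin 2),
                  ((Complex.normSq (B s p) : ℝ) : ℂ) := by
            intro p
            rw [Matrix.diag]
            rw [hentry p p]
            apply Finset.sum_congr rfl
            intro s _
            rw [mul_comm, Complex.star_def, Complex.mul_conj]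
          simp_rw [hd]
          rw [Finset.sum_comm]
          push_cast
          rfl
        rw [htr] at h1
        exact_mod_cast h1.symm
      have hRi : ∀ i : Fin (k+1), ((σ * phiPlus 2).trace).re
          = (4:ℝ)⁻¹ * ∑ s : Fin 2 × (Fin (k+1) → Fin 2), ∑ f : Fin (k+1) → Fin 2,
              Complex.normSq (∑ a : Fin 2, B s (a, Function.update f i a)) := by
        intro i
        rw [keyi i, Complex.ofReal_re]
      have hsum : ((k:ℝ)+1) * ((σ * phiPlus 2).trace).re
          = (4:ℝ)⁻¹ * ∑ s : Fin 2 × (Fin (k+1) → Fin 2), ∑ i : Fin (k+1),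
              ∑ f : Fin (k+1) → Fin 2,
                Complex.normSq (∑ a : Fin 2, B s (a, Function.update f i a)) := by
        calc ((k:ℝ)+1) * ((σ * phiPlus 2).trace).re
            = ∑ _i : Fin (k+1), ((σ * phiPlus 2).trace).re := by
              rw [Finset.sum_const, Finset.card_univ, Fintype.card_fin, nsmul_eq_mul]
              push_cast
              ring
          _ = ∑ i : Fin (k+1), (4:ℝ)⁻¹ * ∑ s : Fin 2 × (Fin (k+1) → Fin 2),
                ∑ f : Fin (k+1) → Fin 2,
                  Complex.normSq (∑ a : Fin 2, B s (a, Function.update f i a)) :=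
              Finset.sum_congr rfl fun i _ => hRi i
          _ = (4:ℝ)⁻¹ * ∑ i : Fin (k+1), ∑ s : Fin 2 × (Fin (k+1) → Fin 2),
                ∑ f : Fin (k+1) → Fin 2,
                  Complex.normSq (∑ a : Fin 2, B s (a, Function.update f i a)) := by
              rw [Finset.mul_sum]
          _ = (4:ℝ)⁻¹ * ∑ s : Fin 2 × (Fin (k+1) → Fin 2), ∑ i : Fin (k+1),
                ∑ f : Fin (k+1) → Fin 2,
                  Complex.normSq (∑ a : Fin 2, B s (a, Function.update f i a)) := by
              rw [Finset.sum_comm]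
      have hbound : ((k:ℝ)+1) * ((σ * phiPlus 2).trace).re ≤ (4:ℝ)⁻¹ * (2*(k:ℝ)+4) := by
        rw [hsum]
        have step1 : (∑ s : Fin 2 × (Fin (k+1) → Fin 2), ∑ i : Fin (k+1),
              ∑ f : Fin (k+1) → Fin 2,
                Complex.normSq (∑ a : Fin 2, B s (a, Function.update f i a)))
            ≤ ∑ s : Fin 2 × (Fin (k+1) → Fin 2),
                (2*(k:ℝ)+4) * ∑ p : Fin 2 × (Fin (k+1) → Fin 2), Complex.normSq (B s p) :=
          Finset.sum_le_sum fun s _ => Stmt6Aux.core (fun p => B s p)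
        have step2 : (∑ s : Fin 2 × (Fin (k+1) → Fin 2),
              (2*(k:ℝ)+4) * ∑ p : Fin 2 × (Fin (k+1) → Fin 2), Complex.normSq (B s p))
            = (2*(k:ℝ)+4) := by
          rw [← Finset.mul_sum, trace1, mul_one]
        have := step1.trans_eq step2
        nlinarith [this]
      have hk1 : (0:ℝ) < (k:ℝ)+1 := by positivity
      rw [show ((k:ℝ) + 2) / (2 * ((k:ℝ) + 1))
          = ((4:ℝ)⁻¹ * (2*(k:ℝ)+4)) / ((k:ℝ)+1) from by field_simp; ring]
      rw [le_div_iff₀ hk1]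
      nlinarith [hbound]
  · norm_num
end

section
/- The operator M_{ab} ⊗ I_e + M_{ae} ⊗ I_b on three qubits, where M = αI − Φ⁺ (two-qubit), has eigenvalues 2α, (4α−3)/2, and (4α−1)/2; consequently it is positive semidefinite if and only if α ≥ 3/4. -/
open Matrix Kronecker ComplexOrder

/-- `M = αI − Φ⁺` on two qubits. -/
noncomputable def Malpha (α : ℝ) : Matrix (Fin 2 × Fin 2) (Fin 2 × Fin 2) ℂ :=
  (α : ℂ) • (1 : Matrix (Fin 2 × Fin 2) (Fin 2 × Fin 2) ℂ) - phiPlus 2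

/-- `M_{ab} ⊗ I_e` on three qubits `((a,b),e)`. -/
noncomputable def MabIe (α : ℝ) :
    Matrix ((Fin 2 × Fin 2) × Fin 2) ((Fin 2 × Fin 2) × Fin 2) ℂ :=
  Malpha α ⊗ₖ (1 : Matrix (Fin 2) (Fin 2) ℂ)

/-- `M_{ae} ⊗ I_b` on three qubits `((a,b),e)`: `M` acting on qubits `a,e`,
identity on `b` (i.e. `M_{ab} ⊗ I_e` conjugated by the swap of `b` and `e`). -/
noncomputable def MaeIb (α : ℝ) :
    Matrix ((Fin 2 × Fin 2) × Fin 2) ((Fin 2 × Fin 2) × Fin 2) ℂ :=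
  Matrix.of fun p q =>
    Malpha α (p.1.1, p.2) (q.1.1, q.2) * (if p.1.2 = q.1.2 then 1 else 0)

section evalvec
variable {β : Type*} (x0 x1 x2 x3 x4 x5 x6 x7 : β)
lemma cvn0 : ![x0,x1,x2,x3,x4,x5,x6,x7] (0 : Fin 8) = x0 := rfl
lemma cvn1 : ![x0,x1,x2,x3,x4,x5,x6,x7] (1 : Fin 8) = x1 := rfl
lemma cvn2 : ![x0,x1,x2,x3,x4,x5,x6,x7] (2 : Fin 8) = x2 := rfl
lemma cvn3 : ![x0,x1,x2,x3,x4,x5,x6,x7] (3 : Fin 8) = x3 := rfl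
lemma cvn4 : ![x0,x1,x2,x3,x4,x5,x6,x7] (4 : Fin 8) = x4 := rfl
lemma cvn5 : ![x0,x1,x2,x3,x4,x5,x6,x7] (5 : Fin 8) = x5 := rfl
lemma cvn6 : ![x0,x1,x2,x3,x4,x5,x6,x7] (6 : Fin 8) = x6 := rfl
lemma cvn7 : ![x0,x1,x2,x3,x4,x5,x6,x7] (7 : Fin 8) = x7 := rfl
lemma cvm0 (h : (0:ℕ) < 8) : ![x0,x1,x2,x3,x4,x5,x6,x7] (⟨0,h⟩ : Fin 8) = x0 := rfl
lemma cvm1 (h : (1:ℕ) < 8) : ![x0,x1,x2,x3,x4,x5,x6,x7] (⟨1,h⟩ : Fin 8) = x1 := rfl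
lemma cvm2 (h : (2:ℕ) < 8) : ![x0,x1,x2,x3,x4,x5,x6,x7] (⟨2,h⟩ : Fin 8) = x2 := rfl
lemma cvm3 (h : (3:ℕ) < 8) : ![x0,x1,x2,x3,x4,x5,x6,x7] (⟨3,h⟩ : Fin 8) = x3 := rfl
lemma cvm4 (h : (4:ℕ) < 8) : ![x0,x1,x2,x3,x4,x5,x6,x7] (⟨4,h⟩ : Fin 8) = x4 := rfl
lemma cvm5 (h : (5:ℕ) < 8) : ![x0,x1,x2,x3,x4,x5,x6,x7] (⟨5,h⟩ : Fin 8) = x5 := rfl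
lemma cvm6 (h : (6:ℕ) < 8) : ![x0,x1,x2,x3,x4,x5,x6,x7] (⟨6,h⟩ : Fin 8) = x6 := rfl
lemma cvm7 (h : (7:ℕ) < 8) : ![x0,x1,x2,x3,x4,x5,x6,x7] (⟨7,h⟩ : Fin 8) = x7 := rfl
end evalvec

/-- The basis reordering `((a,b),e) ↦ 4a+2b+e`. -/
def enc8 : ((Fin 2 × Fin 2) × Fin 2) ≃ Fin 8 where
  toFun p := ⟨4 * p.1.1.val + 2 * p.1.2.val + p.2.val, by omega⟩
  invFun i := ((⟨i.val / 4, by have := i.isLt; omega⟩, ⟨i.val / 2 % 2, by omega⟩),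
    ⟨i.val % 2, by omega⟩)
  left_inv := by decide
  right_inv := by decide

/-- Matrix of (unnormalized, pairwise orthogonal) eigenvectors as columns. -/
noncomputable def U8 : Matrix (Fin 8) (Fin 8) ℂ :=
!![2,0,1,0,0,0,0,0;
   0,0,0,1,1,1,0,0;
   0,0,0,1,-1,1,0,0;
   0,0,0,0,0,0,1,0;
   0,0,0,0,0,0,0,1;
   1,-1,-1,0,0,0,0,0;
   1,1,-1,0,0,0,0,0;
   0,0,0,2,0,-1,0,0]

/-- Inverse of `U8`. -/
noncomputable def V8 : Matrix (Fin 8) (Fin 8) ℂ :=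
!![1/3,0,0,0,0,1/6,1/6,0;
   0,0,0,0,0,-(1/2),1/2,0;
   1/3,0,0,0,0,-(1/3),-(1/3),0;
   0,1/6,1/6,0,0,0,0,1/3;
   0,1/2,-(1/2),0,0,0,0,0;
   0,1/3,1/3,0,0,0,0,-(1/3);
   0,0,0,1,0,0,0,0;
   0,0,0,0,1,0,0,0]

/-- Reciprocals of the squared norms of the columns of `U8`. -/
noncomputable def nInv8 : Fin 8 → ℂ := ![1/6, 1/2, 1/3, 1/6, 1/2, 1/3, 1, 1]

/-- The eigenvalues. -/
noncomputable def dEig (α : ℝ) : Fin 8 → ℂ :=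
  ![(((4*α-3)/2 : ℝ) : ℂ), (((4*α-1)/2 : ℝ) : ℂ), ((2*α : ℝ) : ℂ),
    (((4*α-3)/2 : ℝ) : ℂ), (((4*α-1)/2 : ℝ) : ℂ), ((2*α : ℝ) : ℂ),
    ((2*α : ℝ) : ℂ), ((2*α : ℝ) : ℂ)]

/-- Eigenvalues divided by squared norms, as real casts. -/
noncomputable def dN (α : ℝ) : Fin 8 → ℂ :=
  ![(((4*α-3)/12 : ℝ) : ℂ), (((4*α-1)/4 : ℝ) : ℂ), ((2*α/3 : ℝ) : ℂ),
    (((4*α-3)/12 : ℝ) : ℂ), (((4*α-1)/4 : ℝ) : ℂ), ((2*α/3 : ℝ) : ℂ),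
    ((2*α : ℝ) : ℂ), ((2*α : ℝ) : ℂ)]

/-- `dEig`-scaled rows of `V8`. -/
noncomputable def W8 (α : ℝ) : Matrix (Fin 8) (Fin 8) ℂ :=
  Matrix.of fun i j => dEig α i * V8 i j

/-- The operator `M_{ab}⊗I_e + M_{ae}⊗I_b` written in the `4a+2b+e` basis. -/
noncomputable def EMat (α : ℝ) : Matrix (Fin 8) (Fin 8) ℂ :=
!![2*(α:ℂ)-1, 0,0,0,0, -(1/2), -(1/2), 0;
   0, 2*(α:ℂ)-1/2, 0,0,0,0,0, -(1/2);
   0,0, 2*(α:ℂ)-1/2, 0,0,0,0, -(1/2);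
   0,0,0, 2*(α:ℂ), 0,0,0,0;
   0,0,0,0, 2*(α:ℂ), 0,0,0;
   -(1/2),0,0,0,0, 2*(α:ℂ)-1/2, 0,0;
   -(1/2),0,0,0,0, 0, 2*(α:ℂ)-1/2, 0;
   0, -(1/2), -(1/2), 0,0,0,0, 2*(α:ℂ)-1]

set_option maxHeartbeats 3000000 in
lemma hUV8 : U8 * V8 = 1 := by
  ext i j
  fin_cases i <;> fin_cases j <;>
    norm_num [U8, V8, Matrix.mul_apply, Fin.sum_univ_succ, Matrix.one_apply,
      Matrix.cons_val_zero, Matrix.cons_val_succ, Fin.ext_iff]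

set_option maxHeartbeats 3000000 in
lemma hV8 : Matrix.diagonal nInv8 * U8ᴴ = V8 := by
  ext i j
  fin_cases i <;> fin_cases j <;>
    norm_num [U8, V8, nInv8, Matrix.diagonal_mul, Matrix.conjTranspose_apply,
      Matrix.cons_val_zero, Matrix.cons_val_succ]

lemma hW8 (α : ℝ) : Matrix.diagonal (dEig α) * V8 = W8 α := by
  ext i j
  rw [Matrix.diagonal_mul]
  rfl

set_option maxHeartbeats 3000000 in
lemma hEUW (α : ℝ) : EMat α = U8 * W8 α := by
  ext i j
  fin_cases i <;> fin_cases j <;>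
    norm_num [EMat, W8, U8, V8, dEig, Matrix.mul_apply, Fin.sum_univ_succ,
        Matrix.cons_val_zero, Matrix.cons_val_succ] <;>
    (push_cast; ring)

lemma hdecomp (α : ℝ) : EMat α = U8 * (Matrix.diagonal (dEig α) * V8) := by
  rw [hW8, hEUW]

set_option maxHeartbeats 3000000 in
lemma hA8 (α : ℝ) :
    (MabIe α + MaeIb α).submatrix enc8.symm enc8.symm = EMat α := by
  ext i j
  fin_cases i <;> fin_cases j <;>
    norm_num [Matrix.submatrix_apply, MabIe, MaeIb, Malpha, phiPlus,
        Matrix.kroneckerMap_apply, Matrix.one_apply, EMat, enc8,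
        Prod.ext_iff, Fin.ext_iff, Matrix.cons_val_zero, Matrix.cons_val_succ] <;>
    (push_cast; ring)
lemma detFormulaA (α : ℝ) (z : ℂ) :
    z • (1 : Matrix (Fin 8) (Fin 8) ℂ) - EMat α
      = U8 * (Matrix.diagonal (fun i => z - dEig α i) * V8) := by
  have hd : (Matrix.diagonal (fun i => z - dEig α i) : Matrix (Fin 8) (Fin 8) ℂ)
      = Matrix.diagonal (fun _ => z) - Matrix.diagonal (dEig α) :=
    (Matrix.diagonal_sub (fun _ => z) (dEig α)).symm
  rw [hd, Matrix.sub_mul, Matrix.mul_sub, ← hdecomp]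
  congr 1
  rw [← Matrix.smul_eq_diagonal_mul, Matrix.mul_smul, hUV8]

lemma hVU8 : V8 * U8 = 1 := mul_eq_one_comm.mp hUV8

lemma unitIff (α : ℝ) (z : ℂ) :
    IsUnit (z • (1 : Matrix (Fin 8) (Fin 8) ℂ) - EMat α) ↔ ∀ i, z - dEig α i ≠ 0 := by
  constructor
  · intro h i
    obtain ⟨b, hb⟩ := h.exists_right_inv
    rw [detFormulaA α z] at hb
    have hB : Matrix.diagonal (fun i => z - dEig α i) * (V8 * b * U8) = 1 := by
      calc Matrix.diagonal (fun i => z - dEig α i) * (V8 * b * U8)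
          = V8 * (U8 * (Matrix.diagonal (fun i => z - dEig α i) * V8) * b) * U8 := by
            simp only [← Matrix.mul_assoc]
            rw [hVU8, Matrix.one_mul]
        _ = V8 * 1 * U8 := by rw [hb]
        _ = 1 := by rw [Matrix.mul_one, hVU8]
    have h3 : (Matrix.diagonal (fun i => z - dEig α i) * (V8 * b * U8)) i i
        = (1 : Matrix (Fin 8) (Fin 8) ℂ) i i := by rw [hB]
    rw [Matrix.diagonal_mul, Matrix.one_apply_eq] at h3
    intro hzero
    rw [hzero, zero_mul] at h3
    exact zero_ne_one h3
  · intro h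
    have hinv : (fun i => (z - dEig α i) * (z - dEig α i)⁻¹) = fun _ => (1:ℂ) :=
      funext fun i => mul_inv_cancel₀ (h i)
    have hTW : (z • (1 : Matrix (Fin 8) (Fin 8) ℂ) - EMat α)
        * (U8 * (Matrix.diagonal (fun i => (z - dEig α i)⁻¹) * V8)) = 1 := by
      rw [detFormulaA α z]
      simp only [← Matrix.mul_assoc]
      rw [Matrix.mul_assoc (U8 * Matrix.diagonal _) V8 U8, hVU8, Matrix.mul_one,
        Matrix.mul_assoc U8 _ _, Matrix.diagonal_mul_diagonal, hinv, Matrix.diagonal_one,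
        Matrix.mul_one, hUV8]
    exact ⟨⟨_, _, hTW, mul_eq_one_comm.mp hTW⟩, rfl⟩

lemma memSpec (α : ℝ) (z : ℂ) :
    z ∈ spectrum ℂ (EMat α) ↔ ∃ i, z = dEig α i := by
  rw [spectrum.mem_iff, Algebra.algebraMap_eq_smul_one, unitIff]
  simp only [not_forall, not_not, sub_eq_zero]

lemma hdN (α : ℝ) : (fun i => dEig α i * nInv8 i) = dN α := by
  funext i
  fin_cases i <;>
    simp [dEig, nInv8, dN, cvn0, cvn1, cvn2, cvn3, cvn4, cvn5, cvn6, cvn7,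
       cvm0, cvm1, cvm2, cvm3, cvm4, cvm5, cvm6, cvm7] <;>
    (push_cast; ring)

lemma hdecompH (α : ℝ) : EMat α = U8 * Matrix.diagonal (dN α) * U8ᴴ := by
  rw [hdecomp, ← hV8, ← Matrix.mul_assoc (Matrix.diagonal (dEig α)),
    Matrix.diagonal_mul_diagonal, ← Matrix.mul_assoc]
  congr 2
  rw [← hdN]

/-- the operator `M_{ab} ⊗ I_e + M_{ae} ⊗ I_b` has eigenvalues
`2α`, `(4α−3)/2`, `(4α−1)/2`, and is positive semidefinite iff `α ≥ 3/4`. -/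
theorem stmt7 (α : ℝ) :
    spectrum ℂ (MabIe α + MaeIb α)
      = {((2 * α : ℝ) : ℂ), (((4 * α - 3) / 2 : ℝ) : ℂ), (((4 * α - 1) / 2 : ℝ) : ℂ)} ∧
    ((MabIe α + MaeIb α).PosSemidef ↔ 3 / 4 ≤ α) := by
  have hspec : spectrum ℂ ((MabIe α + MaeIb α).submatrix ⇑enc8.symm ⇑enc8.symm)
      = spectrum ℂ (MabIe α + MaeIb α) := by
    have := AlgEquiv.spectrum_eq (Matrix.reindexAlgEquiv ℂ ℂ enc8) (MabIe α + MaeIb α)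
    simpa [Matrix.reindexAlgEquiv_apply, Matrix.reindex_apply] using this
  constructor
  · rw [← hspec, hA8]
    ext z
    rw [memSpec]
    constructor
    · rintro ⟨i, rfl⟩
      fin_cases i <;>
        simp [dEig, cvn0, cvn1, cvn2, cvn3, cvn4, cvn5, cvn6, cvn7,
          cvm0, cvm1, cvm2, cvm3, cvm4, cvm5, cvm6, cvm7,
          Set.mem_insert_iff, Set.mem_singleton_iff] <;> tauto
    · intro hz
      rcases hz with h | h | h
      · exact ⟨2, by rw [h]; simp [dEig, cvn2]⟩
      · exact ⟨0, by rw [h]; simp [dEig, cvn0]⟩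
      · exact ⟨1, by rw [h]; simp [dEig, cvn1]⟩
  · constructor
    · intro h
      have hE : (EMat α).PosSemidef := by
        rw [← hA8]
        exact (Matrix.posSemidef_submatrix_equiv enc8.symm).mpr h
      have h2 := hE.dotProduct_mulVec_nonneg (![2,0,0,0,0,1,1,0])
      have e1 : dotProduct (star ![2,0,0,0,0,1,1,0]) ((EMat α) *ᵥ ![2,0,0,0,0,1,1,0])
          = ((12*α-9 : ℝ) : ℂ) := by
        simp [EMat, dotProduct, Matrix.mulVec, Fin.sum_univ_succ, Pi.star_apply,
          Matrix.cons_val_zero, Matrix.cons_val_succ, Complex.conj_ofNat]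
        push_cast
        ring
      rw [e1] at h2
      have := Complex.zero_le_real.mp h2
      linarith
    · intro hα
      have hdpos : (Matrix.diagonal (dN α)).PosSemidef := by
        refine Matrix.posSemidef_diagonal_iff.mpr fun i => ?_
        fin_cases i <;>
          simp only [dN, cvn0, cvn1, cvn2, cvn3, cvn4, cvn5, cvn6, cvn7,
            cvm0, cvm1, cvm2, cvm3, cvm4, cvm5, cvm6, cvm7] <;>
          (rw [Complex.zero_le_real]; linarith)
      have hE : (EMat α).PosSemidef := by
        rw [hdecompH α]
        exact hdpos.mul_mul_conjTranspose_same U8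
      refine (Matrix.posSemidef_submatrix_equiv enc8.symm).mp ?_
      rw [hA8]
      exact hE
end

section
/- Suppose there exists a state σ_{ABB₁…B_k} such that tr(ρ_{AB} σ_{ABᵢ}) = 0 for all i=1,…,k and tr(ρ_{AB} σ_{AB}) > 0. Then the measure-and-prepare map Λ(ρ') = tr(ρ' σ_{AB})Φ⁺ + ∑ᵢ tr(ρ' σ_{ABᵢ})(I/4) satisfies F(ρ_{AB},Λ) = 1, i.e., Λ(ρ_{AB}) is proportional to Φ⁺ with positive constant. -/
open Matrix ComplexOrder

lemma red_isHermitian {α β : Type*} [Fintype α] [Fintype β] [DecidableEq β] (k : ℕ)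
    (σ : Matrix (α × (Fin (k + 1) → β)) (α × (Fin (k + 1) → β)) ℂ)
    (hσ : σ.IsHermitian) (i : Fin (k + 1)) : (red k σ i).IsHermitian := by
  ext p q
  simp only [red, conjTranspose_apply, Matrix.of_apply, star_mul', star_inv₀]
  rw [star_natCast]
  congr 1
  rw [star_sum]
  refine Finset.sum_congr rfl fun f _ => ?_
  have := congrFun (congrFun hσ (p.1, Function.update f i p.2)) (q.1, Function.update f i q.2)
  simpa [conjTranspose_apply] using this

lemma trace_mul_hermitian_real {n : Type*} [Fintype n]
    (ρ M : Matrix n n ℂ) (hρ : ρ.IsHermitian) (hM : M.IsHermitian) :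
    (ρ * M).trace = (((ρ * M).trace).re : ℂ) := by
  have h : star ((ρ * M).trace) = (ρ * M).trace := by
    rw [← Matrix.trace_conjTranspose, Matrix.conjTranspose_mul, hρ.eq, hM.eq,
      Matrix.trace_mul_comm]
  exact (Complex.conj_eq_iff_re.mp h).symm

/-- if there is a state `σ_{ABB₁…B_k}` whose reduction `σ_{AB}` (copy `0`)
has positive overlap with `ρ_{AB}` while the reductions `σ_{ABᵢ}` (`i ≠ 0`) have zero
overlap, then the measure-and-prepare map
`Λ(ρ') = tr(ρ'σ_{AB})Φ⁺ + ∑ᵢ tr(ρ'σ_{ABᵢ})(I/4)` maps `ρ` to a positive multiple of Φ⁺,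
i.e. `F(ρ,Λ) = 1`. -/
theorem stmt9 {A B : Type*} [Fintype A] [Fintype B] [DecidableEq B] (k : ℕ)
    (ρ : Matrix (A × B) (A × B) ℂ) (hρ : ρ.PosSemidef) (hρtr : ρ.trace = 1)
    (σ : Matrix (A × (Fin (k + 1) → B)) (A × (Fin (k + 1) → B)) ℂ)
    (hσ : σ.PosSemidef) (hσtr : σ.trace = 1)
    (h0 : 0 < ((ρ * red k σ 0).trace).re)
    (hi : ∀ i : Fin (k + 1), i ≠ 0 → (ρ * red k σ i).trace = 0) :
    ∃ c : ℝ, 0 < c ∧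
      (ρ * red k σ 0).trace • phiPlus 2
          + (∑ i ∈ Finset.univ.filter (fun i : Fin (k + 1) => i ≠ 0),
              (ρ * red k σ i).trace) •
            ((1 / 4 : ℂ) • (1 : Matrix (Fin 2 × Fin 2) (Fin 2 × Fin 2) ℂ))
        = (c : ℂ) • phiPlus 2 := by
  refine ⟨((ρ * red k σ 0).trace).re, h0, ?_⟩
  have hsum : (∑ i ∈ Finset.univ.filter (fun i : Fin (k + 1) => i ≠ 0),
      (ρ * red k σ i).trace) = 0 :=
    Finset.sum_eq_zero fun i hi' => hi i (Finset.mem_filter.mp hi').2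
  rw [hsum, zero_smul, add_zero,
    trace_mul_hermitian_real ρ (red k σ 0) hρ.1 (red_isHermitian k σ hσ.1 0)]
  simp
end

section
/- If a density matrix ρ_{AB} is not full rank, then there exist density matrices σ⁽¹⁾ and σ⁽²⁾ on AB (or on AE with E ≅ B) arising as two distinct reductions of a single tripartite state σ_{ABE}, such that tr(ρ σ⁽²⁾) = 0 while tr(ρ σ⁽¹⁾) > 0. -/
open Matrix ComplexOrder

/-- Reduction of a tripartite state on `A × (B × E)` to `A × B` (tracing out `E`). -/
noncomputable def redAB {A B E : Type*} [Fintype E]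
    (σ : Matrix (A × (B × E)) (A × (B × E)) ℂ) : Matrix (A × B) (A × B) ℂ :=
  Matrix.of fun p q => ∑ e, σ (p.1, (p.2, e)) (q.1, (q.2, e))

/-- Reduction of a tripartite state on `A × (B × E)` to `A × E` (tracing out `B`). -/
noncomputable def redAE {A B E : Type*} [Fintype B]
    (σ : Matrix (A × (B × E)) (A × (B × E)) ℂ) : Matrix (A × E) (A × E) ℂ :=
  Matrix.of fun p q => ∑ b, σ (p.1, (b, p.2)) (q.1, (b, q.2))

/-- Reduction of a tripartite state on `(A × A') × B` to the first `A` copy and `B`. -/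
noncomputable def redA0B {A B : Type*} [Fintype A]
    (σ : Matrix ((A × A) × B) ((A × A) × B) ℂ) : Matrix (A × B) (A × B) ℂ :=
  Matrix.of fun p q => ∑ a, σ ((p.1, a), p.2) ((q.1, a), q.2)

/-- Reduction of a tripartite state on `(A × A') × B` to the second `A` copy and `B`. -/
noncomputable def redA1B {A B : Type*} [Fintype A]
    (σ : Matrix ((A × A) × B) ((A × A) × B) ℂ) : Matrix (A × B) (A × B) ℂ :=
  Matrix.of fun p q => ∑ a, σ ((a, p.1), p.2) ((a, q.1), q.2)

section Aux

lemma trace_mul_sum' {n : Type*} [Fintype n] (A B : Matrix n n ℂ) :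
    (A * B).trace = ∑ p, ∑ q, A p q * B q p := by
  simp [Matrix.trace, Matrix.mul_apply, Matrix.diag]

lemma sum4_reorder {A B C D : Type*} [Fintype A] [Fintype B] [Fintype C] [Fintype D]
    (f : A → B → C → D → ℂ) :
    ∑ a, ∑ b, ∑ c, ∑ d, f a b c d = ∑ d, ∑ b, ∑ a, ∑ c, f a b c d := by
  calc ∑ a, ∑ b, ∑ c, ∑ d, f a b c d
      = ∑ a, ∑ b, ∑ d, ∑ c, f a b c d :=
        Finset.sum_congr rfl fun a _ => Finset.sum_congr rfl fun b _ => Finset.sum_comm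
    _ = ∑ a, ∑ d, ∑ b, ∑ c, f a b c d :=
        Finset.sum_congr rfl fun a _ => Finset.sum_comm
    _ = ∑ d, ∑ a, ∑ b, ∑ c, f a b c d := Finset.sum_comm
    _ = ∑ d, ∑ b, ∑ a, ∑ c, f a b c d :=
        Finset.sum_congr rfl fun d _ => Finset.sum_comm

end Aux

/-- if a density matrix `ρ_{AB}` is not of full rank, then there is a
tripartite state with two distinct reductions `σ⁽¹⁾, σ⁽²⁾` on `AB` (with the extending
system `E` a copy of `B`, or alternatively a copy of `A` on Alice's side) such that
`tr(ρσ⁽²⁾) = 0` while `tr(ρσ⁽¹⁾) > 0`. -/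
theorem stmt10 {dA dB : ℕ}
    (ρ : Matrix (Fin dA × Fin dB) (Fin dA × Fin dB) ℂ)
    (hρ : ρ.PosSemidef) (hρtr : ρ.trace = 1)
    (hker : ∃ v : Fin dA × Fin dB → ℂ, v ≠ 0 ∧ ρ.mulVec v = 0) :
    (∃ σ : Matrix (Fin dA × (Fin dB × Fin dB)) (Fin dA × (Fin dB × Fin dB)) ℂ,
        σ.PosSemidef ∧ σ.trace = 1 ∧
        0 < ((ρ * redAB σ).trace).re ∧ (ρ * redAE σ).trace = 0) ∨
    (∃ σ : Matrix ((Fin dA × Fin dA) × Fin dB) ((Fin dA × Fin dA) × Fin dB) ℂ,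
        σ.PosSemidef ∧ σ.trace = 1 ∧
        0 < ((ρ * redA0B σ).trace).re ∧ (ρ * redA1B σ).trace = 0) := by
  classical
  obtain ⟨v, hv0, hvk⟩ := hker
  obtain ⟨p0, hp0⟩ : ∃ p, v p ≠ 0 := by
    by_contra h; push_neg at h; exact hv0 (funext h)
  set n : ℝ := ∑ p, Complex.normSq (v p) with hn_def
  have hn : 0 < n :=
    Finset.sum_pos' (fun p _ => Complex.normSq_nonneg _)
      ⟨p0, Finset.mem_univ _, Complex.normSq_pos.mpr hp0⟩
  have hdB : 0 < dB := Fin.pos p0.2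
  have hnd : (0:ℝ) < n * dB := by positivity
  -- kernel-test vectors
  set y : Fin dB → Fin dB → (Fin dA × Fin dB → ℂ) :=
    fun e b p => if p.2 = b then v (p.1, e) else 0 with hy
  set Q : Fin dB → Fin dB → ℂ := fun e b => star (y e b) ⬝ᵥ ρ *ᵥ (y e b) with hQdef
  have hQnn : ∀ e b, 0 ≤ Q e b := fun e b => hρ.dotProduct_mulVec_nonneg _
  have hQ : ∀ e b, Q e b =
      ∑ a, ∑ a', (starRingEnd ℂ) (v (a, e)) * (ρ (a,b) (a',b) * v (a', e)) := by
    intro e b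
    simp only [hQdef, hy, dotProduct, mulVec, Pi.star_apply, Fintype.sum_prod_type,
      apply_ite (star : ℂ → ℂ), star_zero, ite_mul, zero_mul, mul_ite, mul_zero,
      Finset.sum_ite_eq', Finset.mem_univ, if_true, RCLike.star_def]
    exact Finset.sum_congr rfl fun a _ => Finset.mul_sum _ _ _
  -- the case-1 candidate state
  set s : ℝ := Real.sqrt (n * dB) with hs
  set W : Matrix (Fin dB) (Fin dA × (Fin dB × Fin dB)) ℂ :=
    Matrix.of fun b p =>
      if p.2.1 = b then ((s⁻¹ : ℝ) : ℂ) * (starRingEnd ℂ) (v (p.1, p.2.2)) else 0 with hW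
  set σ : Matrix (Fin dA × (Fin dB × Fin dB)) (Fin dA × (Fin dB × Fin dB)) ℂ := Wᴴ * W
    with hσdef
  set c : ℝ := (n * dB)⁻¹ with hc_def
  have hcpos : 0 < c := by rw [hc_def]; positivity
  have hσ : ∀ p q, σ p q =
      (if p.2.1 = q.2.1 then
        ((c : ℝ) : ℂ) * v (p.1, p.2.2) * (starRingEnd ℂ) (v (q.1, q.2.2)) else 0) := by
    intro p q
    rw [hσdef, Matrix.mul_apply]
    simp only [conjTranspose_apply, hW, Matrix.of_apply]
    rw [Finset.sum_eq_single p.2.1]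
    · by_cases h : p.2.1 = q.2.1
      · rw [if_pos rfl, if_pos h.symm, if_pos h]
        have hss : ((s⁻¹:ℝ):ℂ) * ((s⁻¹:ℝ):ℂ) = ((c:ℝ):ℂ) := by
          rw [← Complex.ofReal_mul, ← mul_inv]
          congr 1
          rw [hc_def]
          congr 1
          exact Real.mul_self_sqrt hnd.le
        simp only [star_mul', RCLike.star_def, Complex.conj_ofReal, Complex.conj_conj]
        rw [mul_mul_mul_comm, hss, mul_assoc]
      · rw [if_pos rfl, if_neg (fun hh => h hh.symm), mul_zero, if_neg h]
    · intro b _ hb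
      rw [if_neg (fun hh => hb hh.symm), star_zero, zero_mul]
    · intro h; exact absurd (Finset.mem_univ _) h
  -- key trace identity
  have key1 : (ρ * redAB σ).trace = ((c:ℝ):ℂ) * ∑ e, ∑ b, Q e b := by
    rw [trace_mul_sum']
    have lhs1 : ∀ p q : Fin dA × Fin dB, ρ p q * (redAB σ) q p =
        if q.2 = p.2 then
          ∑ e, ρ p q * (((c:ℝ):ℂ) * v (q.1, e) * (starRingEnd ℂ) (v (p.1, e)))
        else 0 := by
      intro p q
      simp only [redAB, Matrix.of_apply, hσ]
      simp only [Finset.sum_ite_irrel, Finset.sum_const_zero, mul_ite, mul_zero,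
        Finset.mul_sum]
    calc (∑ p, ∑ q, ρ p q * (redAB σ) q p)
        = ∑ p : Fin dA × Fin dB, ∑ q : Fin dA × Fin dB,
            (if q.2 = p.2 then
              ∑ e, ρ p q * (((c:ℝ):ℂ) * v (q.1, e) * (starRingEnd ℂ) (v (p.1, e)))
            else 0) :=
          Finset.sum_congr rfl fun p _ => Finset.sum_congr rfl fun q _ => lhs1 p q
      _ = ∑ a, ∑ b, ∑ a', ∑ e,
            ρ (a,b) (a',b) * (((c:ℝ):ℂ) * v (a', e) * (starRingEnd ℂ) (v (a, e))) := by
          rw [Fintype.sum_prod_type]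
          refine Finset.sum_congr rfl fun a _ => ?_
          refine Finset.sum_congr rfl fun b _ => ?_
          rw [Fintype.sum_prod_type]
          rw [Finset.sum_comm]
          simp only [Finset.sum_ite_irrel, Finset.sum_const_zero, Finset.sum_ite_eq,
            Finset.sum_ite_eq', Finset.mem_univ, if_true]
      _ = ∑ e, ∑ b, ∑ a, ∑ a',
            ρ (a,b) (a',b) * (((c:ℝ):ℂ) * v (a', e) * (starRingEnd ℂ) (v (a, e))) :=
          sum4_reorder _
      _ = ((c:ℝ):ℂ) * ∑ e, ∑ b, Q e b := by
          rw [Finset.mul_sum]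
          refine Finset.sum_congr rfl fun e _ => ?_
          rw [Finset.mul_sum]
          refine Finset.sum_congr rfl fun b _ => ?_
          rw [hQ e b, Finset.mul_sum]
          refine Finset.sum_congr rfl fun a _ => ?_
          rw [Finset.mul_sum]
          refine Finset.sum_congr rfl fun a' _ => ?_
          ring
  by_cases hc : 0 < (∑ e, ∑ b, Q e b).re
  · -- Case 1
    left
    refine ⟨σ, posSemidef_conjTranspose_mul_self W, ?_, ?_, ?_⟩
    · -- trace = 1
      have hdiag : ∀ p : Fin dA × (Fin dB × Fin dB), σ p p =
          ((c:ℝ):ℂ) * ((Complex.normSq (v (p.1, p.2.2)) : ℝ) : ℂ) := by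
        intro p
        rw [hσ p p, if_pos rfl, mul_assoc, Complex.mul_conj]
      have : σ.trace = ∑ p : Fin dA × (Fin dB × Fin dB),
          ((c:ℝ):ℂ) * ((Complex.normSq (v (p.1, p.2.2)) : ℝ) : ℂ) := by
        rw [Matrix.trace]
        exact Finset.sum_congr rfl fun p _ => hdiag p
      rw [this, ← Finset.mul_sum]
      have hsum : (∑ p : Fin dA × (Fin dB × Fin dB),
          ((Complex.normSq (v (p.1, p.2.2)) : ℝ) : ℂ)) = (((dB : ℝ) * n : ℝ) : ℂ) := by
        rw [← Complex.ofReal_sum]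
        congr 1
        rw [Fintype.sum_prod_type]
        calc (∑ a, ∑ be : Fin dB × Fin dB, Complex.normSq (v (a, be.2)))
            = ∑ a, ∑ b : Fin dB, ∑ e, Complex.normSq (v (a, e)) := by
              refine Finset.sum_congr rfl fun a _ => ?_
              rw [Fintype.sum_prod_type]
          _ = ∑ a, (dB : ℝ) * ∑ e, Complex.normSq (v (a, e)) := by
              refine Finset.sum_congr rfl fun a _ => ?_
              rw [Finset.sum_const, Finset.card_univ, Fintype.card_fin, nsmul_eq_mul]
          _ = (dB : ℝ) * n := by
              rw [← Finset.mul_sum, hn_def, Fintype.sum_prod_type]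
      rw [hsum, ← Complex.ofReal_mul]
      rw [show c * ((dB:ℝ) * n) = 1 by rw [hc_def]; field_simp]
      exact Complex.ofReal_one
    · -- positivity
      rw [key1]
      have : (((c:ℝ):ℂ) * ∑ e, ∑ b, Q e b).re = c * (∑ e, ∑ b, Q e b).re := by
        simp [Complex.mul_re]
      rw [this]
      exact mul_pos hcpos hc
    · -- redAE trace zero
      rw [trace_mul_sum']
      refine Finset.sum_eq_zero fun p _ => ?_
      have h0 : ∑ q, ρ p q * v q = 0 := by
        have := congrFun hvk p
        simpa [mulVec, dotProduct] using this
      have hterm : ∀ q : Fin dA × Fin dB, ρ p q * (redAE σ) q p =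
          (ρ p q * v q) * (((dB : ℕ) : ℂ) * ((c:ℝ):ℂ) * (starRingEnd ℂ) (v p)) := by
        intro q
        simp only [redAE, Matrix.of_apply, hσ, if_pos rfl, ite_true, if_true, Finset.sum_const,
          Finset.card_univ, Fintype.card_fin, nsmul_eq_mul, Prod.mk.eta]
        ring
      rw [Finset.sum_congr rfl fun q _ => hterm q, ← Finset.sum_mul, h0, zero_mul]
  · -- Case 2
    right
    -- all Q e b vanish
    have hS0 : (∑ e, ∑ b, Q e b) = 0 := by
      have hge : 0 ≤ ∑ e, ∑ b, Q e b :=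
        Finset.sum_nonneg fun e _ => Finset.sum_nonneg fun b _ => hQnn e b
      have him : (∑ e, ∑ b, Q e b).im = 0 := by
        have := (Complex.le_def.mp hge).2
        simpa using this.symm
      have hre : (∑ e, ∑ b, Q e b).re = 0 :=
        le_antisymm (not_lt.mp hc) (by simpa using (Complex.le_def.mp hge).1)
      exact Complex.ext hre him
    have hQ0 : ∀ e b, Q e b = 0 := by
      intro e b
      have h1 := (Finset.sum_eq_zero_iff_of_nonneg
        (fun e (_ : e ∈ Finset.univ) =>
          Finset.sum_nonneg fun b _ => hQnn e b)).mp hS0 e (Finset.mem_univ _)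
      exact (Finset.sum_eq_zero_iff_of_nonneg
        (fun b (_ : b ∈ Finset.univ) => hQnn e b)).mp h1 b (Finset.mem_univ _)
    have hker2 : ∀ e b, ρ *ᵥ y e b = 0 := fun e b =>
      (hρ.dotProduct_mulVec_zero_iff _).mp (hQ0 e b)
    set u : Fin dA → ℂ := fun a => v (a, p0.2) with hu
    have hu0 : u p0.1 ≠ 0 := by
      rw [hu]; simpa using hp0
    set m : ℝ := ∑ a, Complex.normSq (u a) with hm_def
    have hm : 0 < m :=
      Finset.sum_pos' (fun a _ => Complex.normSq_nonneg _)
        ⟨p0.1, Finset.mem_univ _, Complex.normSq_pos.mpr hu0⟩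
    have hker' : ∀ (x : Fin dA × Fin dB) (b : Fin dB), ∑ a', ρ x (a', b) * u a' = 0 := by
      intro x b
      have := congrFun (hker2 p0.2 b) x
      simpa [mulVec, dotProduct, hy, hu, Fintype.sum_prod_type, mul_ite, mul_zero,
        Finset.sum_ite_eq', Finset.mem_univ] using this
    obtain ⟨R, hRh, hRsq⟩ : ∃ R : Matrix (Fin dA × Fin dB) (Fin dA × Fin dB) ℂ,
        Rᴴ = R ∧ R * R = ρ := by
      open scoped MatrixOrder in
      exact ⟨CFC.sqrt ρ, (CFC.sqrt_nonneg ρ).posSemidef.1, CFC.sqrt_mul_sqrt_self ρ hρ.nonneg⟩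
    set T : Matrix (Fin dA × Fin dB) ((Fin dA × Fin dA) × Fin dB) ℂ :=
      Matrix.of fun cc p =>
        R cc (p.1.1, p.2) * (((Real.sqrt m)⁻¹ : ℝ) : ℂ) * (starRingEnd ℂ) (u p.1.2)
      with hT
    set σ₂ : Matrix ((Fin dA × Fin dA) × Fin dB) ((Fin dA × Fin dA) × Fin dB) ℂ := Tᴴ * T
      with hσ₂def
    have hsq : ∀ x z, (∑ cc, (starRingEnd ℂ) (R cc x) * R cc z) = ρ x z := by
      intro x z
      have h1 : ρ x z = (R * R) x z := by rw [hRsq]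
      rw [h1, Matrix.mul_apply]
      refine Finset.sum_congr rfl fun cc _ => ?_
      congr 1
      have := hRh
      calc (starRingEnd ℂ) (R cc x) = (Rᴴ) x cc := rfl
        _ = R x cc := by rw [this]
    have hrt : (((Real.sqrt m)⁻¹:ℝ):ℂ) * (((Real.sqrt m)⁻¹:ℝ):ℂ) = ((m⁻¹:ℝ):ℂ) := by
      rw [← Complex.ofReal_mul, ← mul_inv]
      congr 2
      exact Real.mul_self_sqrt hm.le
    have hσ₂ : ∀ p q, σ₂ p q =
        ((m⁻¹:ℝ):ℂ) * ρ (p.1.1, p.2) (q.1.1, q.2) * u p.1.2 * (starRingEnd ℂ) (u q.1.2) := by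
      intro p q
      rw [hσ₂def, Matrix.mul_apply]
      have hterm : ∀ cc, (Tᴴ) p cc * T cc q =
          ((starRingEnd ℂ) (R cc (p.1.1, p.2)) * R cc (q.1.1, q.2)) *
            ((((Real.sqrt m)⁻¹:ℝ):ℂ) * (((Real.sqrt m)⁻¹:ℝ):ℂ) * u p.1.2 *
              (starRingEnd ℂ) (u q.1.2)) := by
        intro cc
        simp only [conjTranspose_apply, hT, Matrix.of_apply, star_mul', RCLike.star_def,
          Complex.conj_conj, Complex.conj_ofReal]
        ring
      rw [Finset.sum_congr rfl fun cc _ => hterm cc, ← Finset.sum_mul, hsq, hrt]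
      ring
    have hnormu : (∑ a, u a * (starRingEnd ℂ) (u a)) = ((m:ℝ):ℂ) := by
      rw [hm_def, Complex.ofReal_sum]
      exact Finset.sum_congr rfl fun a _ => by rw [Complex.mul_conj]
    have hred0 : redA0B σ₂ = ρ := by
      ext p q
      simp only [redA0B, Matrix.of_apply, hσ₂]
      have hterm : ∀ a : Fin dA,
          ((m⁻¹:ℝ):ℂ) * ρ (p.1, p.2) (q.1, q.2) * u a * (starRingEnd ℂ) (u a) =
          (u a * (starRingEnd ℂ) (u a)) * (((m⁻¹:ℝ):ℂ) * ρ p q) := by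
        intro a; rw [Prod.mk.eta, Prod.mk.eta]; ring
      rw [Finset.sum_congr rfl fun a _ => hterm a, ← Finset.sum_mul, hnormu,
        ← mul_assoc, ← Complex.ofReal_mul, mul_inv_cancel₀ hm.ne', Complex.ofReal_one,
        one_mul]
    refine ⟨σ₂, posSemidef_conjTranspose_mul_self T, ?_, ?_, ?_⟩
    · -- trace = 1
      rw [Matrix.trace]
      have hdiag : ∀ p : (Fin dA × Fin dA) × Fin dB, σ₂.diag p =
          (u p.1.2 * (starRingEnd ℂ) (u p.1.2)) * (((m⁻¹:ℝ):ℂ) * ρ (p.1.1, p.2) (p.1.1, p.2)) := by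
        intro p
        rw [Matrix.diag_apply, hσ₂ p p]
        ring
      rw [Finset.sum_congr rfl fun p _ => hdiag p]
      rw [Fintype.sum_prod_type]
      calc (∑ aa : Fin dA × Fin dA, ∑ b,
            (u aa.2 * (starRingEnd ℂ) (u aa.2)) * (((m⁻¹:ℝ):ℂ) * ρ (aa.1, b) (aa.1, b)))
          = ∑ a0, ∑ a1, ∑ b,
            (u a1 * (starRingEnd ℂ) (u a1)) * (((m⁻¹:ℝ):ℂ) * ρ (a0, b) (a0, b)) := by
            rw [Fintype.sum_prod_type]
        _ = ∑ a1, ∑ a0, ∑ b,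
            (u a1 * (starRingEnd ℂ) (u a1)) * (((m⁻¹:ℝ):ℂ) * ρ (a0, b) (a0, b)) :=
            Finset.sum_comm
        _ = ∑ a1, (u a1 * (starRingEnd ℂ) (u a1)) *
              (((m⁻¹:ℝ):ℂ) * ∑ a0, ∑ b, ρ (a0, b) (a0, b)) := by
            refine Finset.sum_congr rfl fun a1 _ => ?_
            simp only [Finset.mul_sum]
        _ = ((m:ℝ):ℂ) * (((m⁻¹:ℝ):ℂ) * ρ.trace) := by
            rw [← Finset.sum_mul, hnormu, Matrix.trace, Fintype.sum_prod_type]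
            simp only [Matrix.diag_apply]
        _ = 1 := by
            rw [hρtr, mul_one, ← Complex.ofReal_mul, mul_inv_cancel₀ hm.ne',
              Complex.ofReal_one]
    · -- positivity
      rw [hred0, trace_mul_sum']
      have hterm : ∀ p q : Fin dA × Fin dB, ρ p q * ρ q p =
          ((Complex.normSq (ρ p q) : ℝ) : ℂ) := by
        intro p q
        rw [← hρ.1.apply q p, Complex.star_def, Complex.mul_conj]
      rw [Finset.sum_congr rfl fun p _ => Finset.sum_congr rfl fun q _ => hterm p q]
      have : (∑ p, ∑ q, ((Complex.normSq (ρ p q) : ℝ) : ℂ)) =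
          (((∑ p, ∑ q, Complex.normSq (ρ p q)) : ℝ) : ℂ) := by
        rw [Complex.ofReal_sum]
        exact Finset.sum_congr rfl fun p _ => (Complex.ofReal_sum _ _).symm
      rw [this, Complex.ofReal_re]
      obtain ⟨p1, hp1⟩ : ∃ p, ρ p p ≠ 0 := by
        by_contra h; push_neg at h
        rw [Matrix.trace] at hρtr
        simp only [Matrix.diag_apply, h, Finset.sum_const_zero] at hρtr
        exact zero_ne_one hρtr
      refine Finset.sum_pos'
        (fun p _ => Finset.sum_nonneg fun q _ => Complex.normSq_nonneg _)
        ⟨p1, Finset.mem_univ _, ?_⟩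
      exact Finset.sum_pos' (fun q _ => Complex.normSq_nonneg _)
        ⟨p1, Finset.mem_univ _, Complex.normSq_pos.mpr hp1⟩
    · -- redA1B trace zero
      rw [trace_mul_sum']
      refine Finset.sum_eq_zero fun p _ => ?_
      rw [Fintype.sum_prod_type, Finset.sum_comm]
      refine Finset.sum_eq_zero fun b2 _ => ?_
      have hterm : ∀ a2 : Fin dA, ρ p (a2, b2) * (redA1B σ₂) (a2, b2) p =
          (ρ p (a2, b2) * u a2) *
            (((m⁻¹:ℝ):ℂ) * (starRingEnd ℂ) (u p.1) * ∑ a, ρ (a, b2) (a, p.2)) := by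
        intro a2
        simp only [redA1B, Matrix.of_apply, hσ₂]
        simp only [Finset.mul_sum]
        exact Finset.sum_congr rfl fun a _ => by ring
      rw [Finset.sum_congr rfl fun a2 _ => hterm a2, ← Finset.sum_mul, hker' p b2,
        zero_mul]
end

section
/- For two distinct density matrices ρ ≠ τ on a finite-dimensional Hilbert space, the trace distance of tensor powers ‖ρ^{⊗n} − τ^{⊗n}‖₁ → 2 as n → ∞; equivalently there exist orthogonal projectors Pₙ, Qₙ = I − Pₙ with tr(ρ^{⊗n}Pₙ) → 1 and tr(τ^{⊗n}Pₙ) → 0. -/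
open Matrix Filter ComplexOrder

/-- The `n`-fold tensor power of a matrix on `ℂ^d`. -/
noncomputable def tpow {d : ℕ} (ρ : Matrix (Fin d) (Fin d) ℂ) (n : ℕ) :
    Matrix (Fin n → Fin d) (Fin n → Fin d) ℂ :=
  Matrix.of fun f g => ∏ i, ρ (f i) (g i)

theorem Matrix.posSemidef_iff_eq_transpose_mul_self {m : Type*} [Fintype m] [DecidableEq m]
    {A : Matrix m m ℂ} : A.PosSemidef ↔ ∃ B : Matrix m m ℂ, A = Bᴴ * B := by
  open scoped MatrixOrder Matrix.Norms.L2Operator in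
  constructor
  · intro h
    obtain ⟨B, hB⟩ := CStarAlgebra.nonneg_iff_eq_star_mul_self.mp h.nonneg
    exact ⟨B, hB⟩
  · rintro ⟨B, rfl⟩
    exact Matrix.posSemidef_conjTranspose_mul_self B

theorem Matrix.IsHermitian.star_mul_self_mul_eq_diagonal {m : Type*} [Fintype m] [DecidableEq m]
    {A : Matrix m m ℂ} (hA : A.IsHermitian) :
    star (hA.eigenvectorUnitary : Matrix m m ℂ) * A * (hA.eigenvectorUnitary : Matrix m m ℂ)
      = Matrix.diagonal (RCLike.ofReal ∘ hA.eigenvalues) := by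
  have := hA.conjStarAlgAut_star_eigenvectorUnitary
  simpa [Unitary.coe_star] using this

variable {d : ℕ}

/-- Tensor product of a family of matrices. -/
noncomputable def tpk {n : ℕ} (B : Fin n → Matrix (Fin d) (Fin d) ℂ) :
    Matrix (Fin n → Fin d) (Fin n → Fin d) ℂ :=
  Matrix.of fun f g => ∏ i, B i (f i) (g i)

lemma tpk_mul {n : ℕ} (B C : Fin n → Matrix (Fin d) (Fin d) ℂ) :
    tpk B * tpk C = tpk (fun i => B i * C i) := by
  ext f g
  simp only [tpk, Matrix.mul_apply, Matrix.of_apply]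
  rw [← Fintype.piFinset_univ, ← Finset.sum_prod_piFinset]
  congr 1; ext h
  rw [← Finset.prod_mul_distrib]

lemma tpk_trace {n : ℕ} (B : Fin n → Matrix (Fin d) (Fin d) ℂ) :
    (tpk B).trace = ∏ i, (B i).trace := by
  simp only [Matrix.trace, Matrix.diag, tpk, Matrix.of_apply]
  rw [← Fintype.piFinset_univ, ← Finset.sum_prod_piFinset]

lemma tpk_conjTranspose {n : ℕ} (B : Fin n → Matrix (Fin d) (Fin d) ℂ) :
    (tpk B)ᴴ = tpk (fun i => (B i)ᴴ) := by
  ext f g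
  simp only [tpk, Matrix.conjTranspose_apply, Matrix.of_apply, star_prod]

lemma tpk_zero {n : ℕ} (B : Fin n → Matrix (Fin d) (Fin d) ℂ) (i₀ : Fin n)
    (h : B i₀ = 0) : tpk B = 0 := by
  ext f g
  simp only [tpk, Matrix.of_apply, Matrix.zero_apply]
  exact Finset.prod_eq_zero (Finset.mem_univ i₀) (by simp [h])

lemma tpow_eq_tpk (ρ : Matrix (Fin d) (Fin d) ℂ) (n : ℕ) :
    tpow ρ n = tpk (fun _ => ρ) := rfl

lemma tpk_posSemidef {n : ℕ} (B : Fin n → Matrix (Fin d) (Fin d) ℂ)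
    (h : ∀ i, (B i).PosSemidef) : (tpk B).PosSemidef := by
  choose C hC using fun i => (Matrix.posSemidef_iff_eq_transpose_mul_self).1 (h i)
  have : tpk B = (tpk C)ᴴ * tpk C := by
    rw [tpk_conjTranspose, tpk_mul]
    exact congrArg tpk (funext fun i => hC i)
  rw [this]
  exact Matrix.posSemidef_conjTranspose_mul_self _

section classical
variable {n : ℕ}

/-- Bernoulli product weight. -/
def wgt (p : ℝ) (x : Fin n → Bool) : ℝ := ∏ i, (if x i then p else 1 - p)

/-- Number of `true`s, as a real. -/
def cnt (x : Fin n → Bool) : ℝ := ∑ i, (if x i then (1:ℝ) else 0)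

lemma sum_factor (g : Fin n → Bool → ℝ) :
    ∑ x : Fin n → Bool, ∏ i, g i (x i) = ∏ i, (g i true + g i false) := by
  rw [← Fintype.piFinset_univ, Finset.sum_prod_piFinset]
  exact Finset.prod_congr rfl fun i _ => by rw [Fintype.sum_bool]

lemma wgt_sum (p : ℝ) : ∑ x : Fin n → Bool, wgt p x = 1 := by
  have h := sum_factor (n := n) (fun _ b => if b then p else 1 - p)
  simpa [wgt] using h

lemma wgt_nonneg {p : ℝ} (h0 : 0 ≤ p) (h1 : p ≤ 1) (x : Fin n → Bool) : 0 ≤ wgt p x :=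
  Finset.prod_nonneg fun i _ => by by_cases h : x i <;> simp [h, h0] <;> linarith

lemma wgt_moment (p : ℝ) :
    ∑ x : Fin n → Bool, wgt p x * (cnt x - n * p)^2 = n * (p * (1 - p)) := by
  have key : ∀ i j : Fin n, ∑ x : Fin n → Bool,
      wgt p x * (((if x i then (1:ℝ) else 0) - p) * ((if x j then (1:ℝ) else 0) - p))
      = if i = j then p * (1-p) else 0 := by
    intro i j
    have expand : ∀ x : Fin n → Bool,
        wgt p x * (((if x i then (1:ℝ) else 0) - p) * ((if x j then (1:ℝ) else 0) - p))
        = ∏ k, ((fun k b => (if b then p else 1 - p) *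
            ((if k = i then (if b then (1:ℝ) else 0) - p else 1) *
             (if k = j then (if b then (1:ℝ) else 0) - p else 1))) k (x k)) := by
      intro x
      simp only [Finset.prod_mul_distrib]
      rw [Fintype.prod_ite_eq' i (fun k => (if x k then (1:ℝ) else 0) - p),
          Fintype.prod_ite_eq' j (fun k => (if x k then (1:ℝ) else 0) - p)]
      rfl
    have h2 := sum_factor (n := n) (fun k b => (if b then p else 1 - p) *
            ((if k = i then (if b then (1:ℝ) else 0) - p else 1) *
             (if k = j then (if b then (1:ℝ) else 0) - p else 1)))
    rw [Finset.sum_congr rfl (fun x _ => expand x), h2]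
    have hfac : ∀ k : Fin n,
        ((fun (b : Bool) => (if b then p else 1 - p) *
            ((if k = i then (if b then (1:ℝ) else 0) - p else 1) *
             (if k = j then (if b then (1:ℝ) else 0) - p else 1))) true
        + (fun (b : Bool) => (if b then p else 1 - p) *
            ((if k = i then (if b then (1:ℝ) else 0) - p else 1) *
             (if k = j then (if b then (1:ℝ) else 0) - p else 1))) false)
        = if k = i then (if k = j then p * (1-p) else 0) else (if k = j then 0 else 1) := by
      intro k
      rcases eq_or_ne k i with hi | hi
      · subst hi
        rcases eq_or_ne k j with hj | hj
        · subst hj; simp; ring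
        · simp [hj]; ring
      · rcases eq_or_ne k j with hj | hj
        · subst hj; simp [hi]; ring
        · simp [hi, hj]
    rw [Finset.prod_congr rfl (fun k _ => hfac k)]
    by_cases hij : i = j
    · subst hij
      rw [if_pos rfl]
      rw [show (fun k : Fin n => if k = i then (if k = i then p*(1-p) else 0) else (if k = i then 0 else 1)) = fun k => if k = i then p*(1-p) else 1 from funext fun k => by by_cases h : k = i <;> simp [h]]
      exact Fintype.prod_ite_eq' i (fun _ => p * (1-p))
    · rw [if_neg hij]
      apply Finset.prod_eq_zero (Finset.mem_univ i)
      simp [hij]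
  have hS : ∀ x : Fin n → Bool, (cnt x - n * p)^2
      = ∑ i, ∑ j, (((if x i then (1:ℝ) else 0) - p) * ((if x j then (1:ℝ) else 0) - p)) := by
    intro x
    rw [← Finset.sum_mul_sum]
    have : cnt x - n * p = ∑ i, ((if x i then (1:ℝ) else 0) - p) := by
      rw [Finset.sum_sub_distrib, cnt]
      simp [Finset.sum_const, mul_comm]
    rw [this]; ring
  calc ∑ x : Fin n → Bool, wgt p x * (cnt x - n * p)^2
      = ∑ x : Fin n → Bool, ∑ i, ∑ j, wgt p x * (((if x i then (1:ℝ) else 0) - p) * ((if x j then (1:ℝ) else 0) - p)) := by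
        refine Finset.sum_congr rfl fun x _ => ?_
        rw [hS x, Finset.mul_sum]
        exact Finset.sum_congr rfl fun i _ => by rw [Finset.mul_sum]
    _ = ∑ i, ∑ j, ∑ x : Fin n → Bool, wgt p x * (((if x i then (1:ℝ) else 0) - p) * ((if x j then (1:ℝ) else 0) - p)) := by
        rw [Finset.sum_comm]
        exact Finset.sum_congr rfl fun i _ => Finset.sum_comm
    _ = ∑ i : Fin n, ∑ j : Fin n, if i = j then p * (1-p) else 0 := by
        exact Finset.sum_congr rfl fun i _ => Finset.sum_congr rfl fun j _ => key i j
    _ = n * (p * (1-p)) := by simp [Finset.sum_ite_eq]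

lemma chebyshev {p ε : ℝ} (h0 : 0 ≤ p) (h1 : p ≤ 1) (hε : 0 < ε)
    (A : Finset (Fin n → Bool)) (hA : ∀ x ∈ A, ε ≤ |cnt x - n * p|) :
    ∑ x ∈ A, wgt p x ≤ n * (p * (1-p)) / ε^2 := by
  have step1 : ∀ x ∈ A, wgt p x ≤ wgt p x * (cnt x - n*p)^2 / ε^2 := by
    intro x hx
    have hw := wgt_nonneg h0 h1 x
    have h2 : ε^2 ≤ (cnt x - n*p)^2 := by
      rw [← sq_abs (cnt x - n*p)]
      exact pow_le_pow_left₀ hε.le (hA x hx) 2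
    calc wgt p x = wgt p x * 1 := by ring
      _ ≤ wgt p x * ((cnt x - n*p)^2/ε^2) := by
          apply mul_le_mul_of_nonneg_left _ hw
          rw [le_div_iff₀ (by positivity)]
          linarith
      _ = wgt p x * (cnt x - n*p)^2/ε^2 := by ring
  calc ∑ x ∈ A, wgt p x ≤ ∑ x ∈ A, wgt p x * (cnt x - n*p)^2 / ε^2 :=
        Finset.sum_le_sum step1
    _ ≤ ∑ x : Fin n → Bool, wgt p x * (cnt x - n*p)^2 / ε^2 := by
        apply Finset.sum_le_sum_of_subset_of_nonneg (Finset.subset_univ A)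
        intro x _ _
        exact div_nonneg (mul_nonneg (wgt_nonneg h0 h1 x) (sq_nonneg _)) (sq_nonneg _)
    _ = n * (p * (1-p)) / ε^2 := by
        rw [← Finset.sum_div, wgt_moment]
end classical

section matrixhelpers
variable {ι : Type*} [Fintype ι] [DecidableEq ι]

lemma psd_diag (M : Matrix ι ι ℂ) (hM : M.PosSemidef) (i : ι) :
    M i i = ((M i i).re : ℂ) ∧ 0 ≤ (M i i).re := by
  have h := hM.dotProduct_mulVec_nonneg (Pi.single i 1)
  have hval : star (Pi.single i 1 : ι → ℂ) ⬝ᵥ M *ᵥ Pi.single i 1 = M i i := by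
    simp [Matrix.mulVec_single, dotProduct, Pi.single_apply, apply_ite]
  rw [hval] at h
  obtain ⟨hre, him⟩ := Complex.nonneg_iff.mp h
  exact ⟨Complex.ext rfl him.symm, hre⟩

lemma trace_unitary_conj (M : Matrix ι ι ℂ) (U : Matrix.unitaryGroup ι ℂ) :
    ((star (U : Matrix ι ι ℂ)) * M * (U : Matrix ι ι ℂ)).trace = M.trace := by
  rw [Matrix.trace_mul_cycle, (Matrix.mem_unitaryGroup_iff).mp U.2, one_mul]

lemma trace_diagonal_mul (dg : ι → ℂ) (N : Matrix ι ι ℂ) :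
    (Matrix.diagonal dg * N).trace = ∑ i, dg i * N i i := by
  simp [Matrix.trace, Matrix.diag, Matrix.diagonal_mul]

/-- Key trace formula: `tr(Δ M) = ∑ λᵢ Nᵢᵢ` with `N = Uᴴ M U`. -/
lemma trace_eig (Δ M : Matrix ι ι ℂ) (hΔ : Δ.IsHermitian) :
    (Δ * M).trace = ∑ i, (hΔ.eigenvalues i : ℂ) *
      ((star (hΔ.eigenvectorUnitary : Matrix ι ι ℂ)) * M *
        (hΔ.eigenvectorUnitary : Matrix ι ι ℂ)) i i := by
  set U : Matrix ι ι ℂ := (hΔ.eigenvectorUnitary : Matrix ι ι ℂ) with hU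
  have h1 : ((star U) * (Δ * M) * U).trace = (Δ * M).trace :=
    trace_unitary_conj _ hΔ.eigenvectorUnitary
  have hUU : U * star U = 1 := (Matrix.mem_unitaryGroup_iff).mp hΔ.eigenvectorUnitary.2
  have h2 : (star U) * (Δ * M) * U
      = Matrix.diagonal (Complex.ofReal ∘ hΔ.eigenvalues) * ((star U) * M * U) := by
    have hd := hΔ.star_mul_self_mul_eq_diagonal
    have e : (star U) * (Δ * M) * U = ((star U) * Δ * U) * ((star U) * M * U) := by
      simp only [mul_assoc]
      rw [← mul_assoc U, hUU, one_mul]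
    rw [e]
    rw [show (star U) * Δ * U = Matrix.diagonal (Complex.ofReal ∘ hΔ.eigenvalues) from hd]
  rw [← h1, h2, trace_diagonal_mul]
  rfl
end matrixhelpers

section traceb
variable {ι : Type*} [Fintype ι] [DecidableEq ι]

lemma trace_psd (M : Matrix ι ι ℂ) (hM : M.PosSemidef) :
    M.trace = ((M.trace).re : ℂ) ∧ 0 ≤ (M.trace).re := by
  have h : M.trace = ((∑ i, (M i i).re : ℝ) : ℂ) := by
    rw [Matrix.trace]
    push_cast
    exact Finset.sum_congr rfl fun i _ => (psd_diag M hM i).1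
  constructor
  · rw [h]; norm_num
  · rw [h]
    simp only [Complex.ofReal_re]
    exact Finset.sum_nonneg fun i _ => (psd_diag M hM i).2

lemma trace_mul_psd_nonneg (R M : Matrix ι ι ℂ) (hR : R.PosSemidef) (hM : M.PosSemidef) :
    (R * M).trace = (((R * M).trace).re : ℂ) ∧ 0 ≤ ((R * M).trace).re := by
  obtain ⟨B, hB⟩ := Matrix.posSemidef_iff_eq_transpose_mul_self.mp hR
  have key : (R * M).trace = (B * M * Bᴴ).trace := by
    rw [hB, mul_assoc, Matrix.trace_mul_comm]
  rw [key]
  exact trace_psd _ (hM.mul_mul_conjTranspose_same B)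

lemma real_trace_bounds (R M : Matrix ι ι ℂ) (hR : R.PosSemidef) (hRt : R.trace = 1)
    (hM : M.PosSemidef) (hM1 : (1 - M).PosSemidef) :
    (R * M).trace = (((R * M).trace).re : ℂ) ∧ 0 ≤ ((R * M).trace).re ∧
      ((R * M).trace).re ≤ 1 := by
  obtain ⟨h1, h2⟩ := trace_mul_psd_nonneg R M hR hM
  refine ⟨h1, h2, ?_⟩
  obtain ⟨_, h4⟩ := trace_mul_psd_nonneg R (1 - M) hR hM1
  have : (R * (1 - M)).trace = 1 - (R * M).trace := by
    rw [mul_sub, mul_one, Matrix.trace_sub, hRt]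
  rw [this] at h4
  simp only [Complex.sub_re, Complex.one_re] at h4
  linarith

lemma trace_conj_diag (U : Matrix.unitaryGroup ι ℂ) (f : ι → ℂ) :
    ((U : Matrix ι ι ℂ) * Matrix.diagonal f * star (U : Matrix ι ι ℂ)).trace = ∑ i, f i := by
  rw [Matrix.trace_mul_cycle, (Matrix.mem_unitaryGroup_iff').mp U.2, one_mul,
    Matrix.trace_diagonal]
end traceb

lemma conj_mul_conj {ι : Type*} [Fintype ι] [DecidableEq ι] (U : Matrix.unitaryGroup ι ℂ)
    (M N : Matrix ι ι ℂ) :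
    ((U : Matrix ι ι ℂ) * M * star (U : Matrix ι ι ℂ)) *
      ((U : Matrix ι ι ℂ) * N * star (U : Matrix ι ι ℂ))
    = (U : Matrix ι ι ℂ) * (M * N) * star (U : Matrix ι ι ℂ) := by
  have hUU' : star (U : Matrix ι ι ℂ) * (U : Matrix ι ι ℂ) = 1 :=
    (Matrix.mem_unitaryGroup_iff').mp U.2
  simp only [mul_assoc]
  rw [← mul_assoc (star (U : Matrix ι ι ℂ)) (U : Matrix ι ι ℂ), hUU', one_mul]

section percopy
variable {d : ℕ}

lemma percopy (ρ τ : Matrix (Fin d) (Fin d) ℂ)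
    (hρ : ρ.PosSemidef) (hρtr : ρ.trace = 1)
    (hτ : τ.PosSemidef) (hτtr : τ.trace = 1) (hne : ρ ≠ τ) :
    ∃ (Q : Matrix (Fin d) (Fin d) ℂ) (a b : ℝ),
      Q.PosSemidef ∧ (1 - Q).PosSemidef ∧ Q * Q = Q ∧
      (ρ * Q).trace = (a : ℂ) ∧ (τ * Q).trace = (b : ℂ) ∧
      0 ≤ b ∧ b < a ∧ a ≤ 1 := by
  have hAH : (ρ - τ).IsHermitian := hρ.1.sub hτ.1
  set lam := hAH.eigenvalues with hlam
  set U : Matrix (Fin d) (Fin d) ℂ := (hAH.eigenvectorUnitary : Matrix (Fin d) (Fin d) ℂ)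
    with hUdef
  have hUU : U * star U = 1 := (Matrix.mem_unitaryGroup_iff).mp hAH.eigenvectorUnitary.2
  have hUU' : star U * U = 1 := (Matrix.mem_unitaryGroup_iff').mp hAH.eigenvectorUnitary.2
  have htrA : (ρ - τ).trace = 0 := by rw [Matrix.trace_sub, hρtr, hτtr, sub_self]
  -- sum of eigenvalues is zero
  have hsumC : ∑ i, (lam i : ℂ) = 0 := by
    have hd := hAH.star_mul_self_mul_eq_diagonal
    have := congrArg Matrix.trace hd
    rw [trace_unitary_conj (ρ - τ) hAH.eigenvectorUnitary, htrA, Matrix.trace_diagonal] at this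
    simpa using this.symm
  have hsumR : ∑ i, lam i = 0 := by
    have := congrArg Complex.re hsumC
    simpa using this
  -- some eigenvalue is positive
  have hpos : ∃ i, 0 < lam i := by
    by_contra h
    push_neg at h
    have hz : ∀ i ∈ Finset.univ, lam i = 0 :=
      (Finset.sum_eq_zero_iff_of_nonpos (fun i _ => h i)).mp hsumR
    have hA0 : ρ - τ = 0 := by
      have hst := hAH.spectral_theorem
      have hzf : (RCLike.ofReal ∘ hAH.eigenvalues : Fin d → ℂ) = 0 :=
        funext fun i => show (RCLike.ofReal (lam i) : ℂ) = 0 by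
          rw [hz i (Finset.mem_univ i)]; simp
      rw [hzf] at hst
      rw [show Matrix.diagonal (0 : Fin d → ℂ) = 0 from Matrix.diagonal_zero, map_zero] at hst
      exact hst
    exact (sub_ne_zero.mpr hne) hA0
  -- the gap
  set g : ℝ := ∑ i, if 0 < lam i then lam i else 0 with hg
  have hgpos : 0 < g := by
    obtain ⟨i₀, hi₀⟩ := hpos
    refine Finset.sum_pos' (fun i _ => ?_) ⟨i₀, Finset.mem_univ i₀, by
      rw [if_pos hi₀]; exact hi₀⟩
    by_cases h : 0 < lam i
    · rw [if_pos h]; exact h.le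
    · rw [if_neg h]
  set dd : Fin d → ℂ := fun i => if 0 < lam i then 1 else 0 with hdd
  set Pi1 : Matrix (Fin d) (Fin d) ℂ := U * Matrix.diagonal dd * star U with hPi
  have hDps : (Matrix.diagonal dd).PosSemidef := by
    rw [Matrix.posSemidef_diagonal_iff]
    intro i
    by_cases h : 0 < lam i <;> simp [hdd, h]
  have hPips : Pi1.PosSemidef := by
    have h2 := hDps.mul_mul_conjTranspose_same U
    rw [hPi, Matrix.star_eq_conjTranspose]
    exact h2
  have hstar : star U = Uᴴ := Matrix.star_eq_conjTranspose U
  have hddsq : ∀ i, dd i * dd i = dd i := by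
    intro i
    by_cases h : 0 < lam i <;> simp [hdd, h]
  have hidem : Pi1 * Pi1 = Pi1 := by
    rw [hPi, conj_mul_conj hAH.eigenvectorUnitary, Matrix.diagonal_mul_diagonal,
      show (fun i => dd i * dd i) = dd from funext hddsq]
  have h1m : 1 - Pi1 = U * Matrix.diagonal (fun i => 1 - dd i) * star U := by
    have hdiag : Matrix.diagonal (fun i => 1 - dd i) = 1 - Matrix.diagonal dd := by
      ext i j
      by_cases hij : i = j
      · subst hij; simp [Matrix.diagonal_apply_eq, Matrix.one_apply_eq]
      · simp [Matrix.diagonal_apply_ne _ hij, Matrix.one_apply_ne hij]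
    rw [hdiag, mul_sub, mul_one, sub_mul, hUU, ← hPi]
  have hPi1ps : (1 - Pi1).PosSemidef := by
    rw [h1m]
    have hD1ps : (Matrix.diagonal (fun i => 1 - dd i)).PosSemidef := by
      rw [Matrix.posSemidef_diagonal_iff]
      intro i
      by_cases h : 0 < lam i <;> simp [hdd, h]
    have h2 := hD1ps.mul_mul_conjTranspose_same U
    rwa [← hstar] at h2
  -- trace identities
  obtain ⟨haeq, ha0, ha1⟩ := real_trace_bounds ρ Pi1 hρ hρtr hPips hPi1ps
  obtain ⟨hbeq, hb0, hb1⟩ := real_trace_bounds τ Pi1 hτ hτtr hPips hPi1ps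
  refine ⟨Pi1, ((ρ * Pi1).trace).re, ((τ * Pi1).trace).re, hPips, hPi1ps, hidem,
    haeq, hbeq, hb0, ?_, ha1⟩
  -- gap : a - b = g > 0
  have hgap : ((ρ - τ) * Pi1).trace = (g : ℂ) := by
    have hform : (ρ - τ) * Pi1
        = U * Matrix.diagonal ((RCLike.ofReal ∘ lam) * dd) * star U := by
      conv_lhs => rw [hAH.spectral_theorem, Unitary.conjStarAlgAut_apply, hPi]
      rw [conj_mul_conj hAH.eigenvectorUnitary, Matrix.diagonal_mul_diagonal]
      rfl
    rw [hform]
    have := trace_conj_diag hAH.eigenvectorUnitary ((RCLike.ofReal ∘ lam) * dd)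
    rw [this]
    rw [hg]
    push_cast
    refine Finset.sum_congr rfl fun i _ => ?_
    by_cases h : 0 < lam i <;> simp [hdd, h]
  have hsub : ((ρ - τ) * Pi1).trace = (ρ * Pi1).trace - (τ * Pi1).trace := by
    rw [sub_mul, Matrix.trace_sub]
  rw [hsub, haeq, hbeq] at hgap
  have : ((ρ * Pi1).trace).re - ((τ * Pi1).trace).re = g := by
    exact_mod_cast hgap
  linarith
end percopy

section tensorproj
variable {d : ℕ} (Q : Matrix (Fin d) (Fin d) ℂ)

/-- Tensor product of projectors according to a boolean pattern. -/
noncomputable def bmat (n : ℕ) (x : Fin n → Bool) : Matrix (Fin n → Fin d) (Fin n → Fin d) ℂ :=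
  tpk (fun i => if x i then Q else 1 - Q)

lemma bmat_herm (hQh : Q.IsHermitian) (n : ℕ) (x : Fin n → Bool) :
    (bmat Q n x)ᴴ = bmat Q n x := by
  rw [bmat, tpk_conjTranspose]
  refine congrArg tpk (funext fun i => ?_)
  by_cases h : x i
  · simp only [h, if_true]; exact hQh
  · simp [h, Matrix.conjTranspose_sub, Matrix.conjTranspose_one, hQh.eq]

lemma bmat_mul (hQi : Q * Q = Q) (n : ℕ) (x y : Fin n → Bool) :
    bmat Q n x * bmat Q n y = if x = y then bmat Q n x else 0 := by
  rw [bmat, bmat, tpk_mul]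
  by_cases hxy : x = y
  · subst hxy
    rw [if_pos rfl]
    refine congrArg tpk (funext fun i => ?_)
    by_cases h : x i
    · simp only [h, if_true]; exact hQi
    · simp only [h]
      rw [if_neg (by simp), sub_mul, one_mul, mul_sub, mul_one, hQi, sub_self, sub_zero]
  · rw [if_neg hxy]
    obtain ⟨i, hi⟩ := Function.ne_iff.mp hxy
    apply tpk_zero _ i
    by_cases h : x i
    · have h' : y i = false := by
        cases hy : y i
        · rfl
        · exact absurd (by rw [h, hy]) hi
      simp only [h, h', if_true]
      rw [if_neg (by simp), mul_sub, mul_one, hQi, sub_self]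
    · have h'' : x i = false := by cases hx : x i; rfl; exact absurd hx h
      have h' : y i = true := by
        cases hy : y i
        · exact absurd (by rw [h'', hy]) hi
        · rfl
      simp only [h'', h', if_true]
      rw [if_neg (by simp), sub_mul, one_mul, hQi, sub_self]
lemma proj_psd {ι : Type*} [Fintype ι] [DecidableEq ι] (P : Matrix ι ι ℂ)
    (hP : Pᴴ = P) (hPi : P * P = P) : P.PosSemidef := by
  have : P = Pᴴ * P := by rw [hP, hPi]
  rw [this]
  exact Matrix.posSemidef_conjTranspose_mul_self P

noncomputable def pmat (c : ℝ) (n : ℕ) : Matrix (Fin n → Fin d) (Fin n → Fin d) ℂ :=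
  ∑ x ∈ Finset.univ.filter (fun x : Fin n → Bool => c * n ≤ cnt x), bmat Q n x

lemma pmat_herm (hQh : Q.IsHermitian) (c : ℝ) (n : ℕ) : (pmat Q c n)ᴴ = pmat Q c n := by
  rw [pmat, Matrix.conjTranspose_sum]
  exact Finset.sum_congr rfl fun x _ => bmat_herm Q hQh n x

lemma pmat_idem (hQi : Q * Q = Q) (c : ℝ) (n : ℕ) :
    pmat Q c n * pmat Q c n = pmat Q c n := by
  rw [pmat, Finset.sum_mul_sum]
  calc ∑ x ∈ Finset.univ.filter (fun x : Fin n → Bool => c * n ≤ cnt x),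
        ∑ y ∈ Finset.univ.filter (fun x : Fin n → Bool => c * n ≤ cnt x),
          bmat Q n x * bmat Q n y
      = ∑ x ∈ Finset.univ.filter (fun x : Fin n → Bool => c * n ≤ cnt x),
        ∑ y ∈ Finset.univ.filter (fun x : Fin n → Bool => c * n ≤ cnt x),
          (if x = y then bmat Q n x else 0) :=
        Finset.sum_congr rfl fun x _ => Finset.sum_congr rfl fun y _ => bmat_mul Q hQi n x y
    _ = pmat Q c n := by
        rw [pmat]
        refine Finset.sum_congr rfl fun x hx => ?_
        rw [Finset.sum_ite_eq _ x (fun _ => bmat Q n x), if_pos hx]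

lemma pmat_trace (R : Matrix (Fin d) (Fin d) ℂ) (a : ℝ)
    (hRQ : (R * Q).trace = (a : ℂ)) (hRtr : R.trace = 1) (c : ℝ) (n : ℕ) :
    (tpow R n * pmat Q c n).trace
      = ((∑ x ∈ Finset.univ.filter (fun x : Fin n → Bool => c * n ≤ cnt x), wgt a x : ℝ) : ℂ) := by
  rw [pmat, Finset.mul_sum, Matrix.trace_sum, Complex.ofReal_sum]
  refine Finset.sum_congr rfl fun x _ => ?_
  rw [tpow_eq_tpk, bmat, tpk_mul, tpk_trace]
  have hterm : ∀ i, (R * (if x i then Q else 1 - Q)).trace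
      = if x i then (a : ℂ) else ((1 - a : ℝ) : ℂ) := by
    intro i
    by_cases h : x i
    · rw [if_pos h, if_pos h, hRQ]
    · rw [if_neg h, if_neg h, mul_sub, mul_one, Matrix.trace_sub, hRtr, hRQ]
      push_cast
      ring
  rw [Finset.prod_congr rfl fun i _ => hterm i, wgt, Complex.ofReal_prod]
  exact Finset.prod_congr rfl fun i _ => by by_cases h : x i <;> simp [h]

end tensorproj

section limits

lemma acc_limits (a b : ℝ) (hb0 : 0 ≤ b) (hba : b < a) (ha1 : a ≤ 1) :
    Tendsto (fun n : ℕ => ∑ x ∈ Finset.univ.filter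
        (fun x : Fin n → Bool => (a + b)/2 * n ≤ cnt x), wgt a x) atTop (nhds 1) ∧
    Tendsto (fun n : ℕ => ∑ x ∈ Finset.univ.filter
        (fun x : Fin n → Bool => (a + b)/2 * n ≤ cnt x), wgt b x) atTop (nhds 0) := by
  have ha0 : 0 ≤ a := le_trans hb0 hba.le
  have hb1 : b ≤ 1 := le_trans hba.le ha1
  set c : ℝ := (a + b)/2 with hc
  set δ : ℝ := (a - b)/2 with hδdef
  have hδ : 0 < δ := by rw [hδdef]; linarith
  set Ka : ℝ := a * (1 - a) / δ^2 with hKa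
  set Kb : ℝ := b * (1 - b) / δ^2 with hKb
  have key2 : ∀ n : ℕ, (∑ x ∈ Finset.univ.filter
      (fun x : Fin n → Bool => c * n ≤ cnt x), wgt a x) ≤ 1 := by
    intro n
    calc ∑ x ∈ Finset.univ.filter (fun x : Fin n → Bool => c * n ≤ cnt x), wgt a x
        ≤ ∑ x : Fin n → Bool, wgt a x :=
          Finset.sum_le_sum_of_subset_of_nonneg (Finset.subset_univ _)
            (fun x _ _ => wgt_nonneg ha0 ha1 x)
      _ = 1 := wgt_sum a
  have key1 : ∀ n : ℕ, 1 ≤ n → 1 - Ka / n ≤ ∑ x ∈ Finset.univ.filter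
      (fun x : Fin n → Bool => c * n ≤ cnt x), wgt a x := by
    intro n hn
    have hnR : (1:ℝ) ≤ n := by exact_mod_cast hn
    have hn0 : (0:ℝ) < n := by linarith
    have hsplit := Finset.sum_filter_add_sum_filter_not Finset.univ
      (fun x : Fin n → Bool => c * n ≤ cnt x) (wgt a)
    rw [wgt_sum a] at hsplit
    have hcheb : (∑ x ∈ Finset.univ.filter
        (fun x : Fin n → Bool => ¬ (c * n ≤ cnt x)), wgt a x) ≤ n * (a * (1 - a)) / (δ * n)^2 := by
      apply chebyshev ha0 ha1 (by positivity)
      intro x hx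
      have hlt : cnt x < c * n := lt_of_not_ge (Finset.mem_filter.mp hx).2
      have h1 : δ * n ≤ n * a - cnt x := by
        have : δ * n = a * n - c * n := by rw [hδdef, hc]; ring
        rw [this]
        have : a * n = n * a := mul_comm a n
        linarith
      calc δ * n ≤ n * a - cnt x := h1
        _ ≤ |cnt x - n * a| := by rw [abs_sub_comm]; exact le_abs_self _
    have heq : (n : ℝ) * (a * (1 - a)) / (δ * n)^2 = Ka / n := by
      rw [hKa]
      field_simp
    rw [heq] at hcheb
    linarith
  have key3 : ∀ n : ℕ, 0 ≤ ∑ x ∈ Finset.univ.filter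
      (fun x : Fin n → Bool => c * n ≤ cnt x), wgt b x := by
    intro n
    exact Finset.sum_nonneg fun x _ => wgt_nonneg hb0 hb1 x
  have key4 : ∀ n : ℕ, 1 ≤ n → (∑ x ∈ Finset.univ.filter
      (fun x : Fin n → Bool => c * n ≤ cnt x), wgt b x) ≤ Kb / n := by
    intro n hn
    have hnR : (1:ℝ) ≤ n := by exact_mod_cast hn
    have hn0 : (0:ℝ) < n := by linarith
    have hcheb : (∑ x ∈ Finset.univ.filter
        (fun x : Fin n → Bool => c * n ≤ cnt x), wgt b x) ≤ n * (b * (1 - b)) / (δ * n)^2 := by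
      apply chebyshev hb0 hb1 (by positivity)
      intro x hx
      have hge : c * n ≤ cnt x := (Finset.mem_filter.mp hx).2
      have h1 : δ * n ≤ cnt x - n * b := by
        have : δ * n = c * n - b * n := by rw [hδdef, hc]; ring
        have h2 : b * n = n * b := mul_comm b n
        linarith
      exact le_trans h1 (le_abs_self _)
    have heq : (n : ℝ) * (b * (1 - b)) / (δ * n)^2 = Kb / n := by
      rw [hKb]
      field_simp
    rw [heq] at hcheb
    exact hcheb
  constructor
  · refine tendsto_of_tendsto_of_tendsto_of_le_of_le'
      (g := fun n : ℕ => 1 - Ka / n) (h := fun _ : ℕ => (1:ℝ)) ?_ ?_ ?_ ?_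
    · simpa using (tendsto_const_div_atTop_nhds_zero_nat Ka).const_sub 1
    · exact tendsto_const_nhds
    · exact Filter.eventually_atTop.mpr ⟨1, key1⟩
    · exact Filter.Eventually.of_forall key2
  · refine tendsto_of_tendsto_of_tendsto_of_le_of_le'
      (g := fun _ : ℕ => (0:ℝ)) (h := fun n : ℕ => Kb / n) ?_ ?_ ?_ ?_
    · exact tendsto_const_nhds
    · exact tendsto_const_div_atTop_nhds_zero_nat Kb
    · exact Filter.Eventually.of_forall key3
    · exact Filter.eventually_atTop.mpr ⟨1, key4⟩
end limits

section eig
variable {ι : Type*} [Fintype ι] [DecidableEq ι]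

lemma eig_bounds (R T P : Matrix ι ι ℂ)
    (hR : R.PosSemidef) (hRtr : R.trace = 1) (hT : T.PosSemidef) (hTtr : T.trace = 1)
    (hP : P.PosSemidef) (hP1 : (1 - P).PosSemidef)
    (hΔ : (R - T).IsHermitian) :
    (∑ f, |hΔ.eigenvalues f|) ≤ 2 ∧
    2 * (((R - T) * P).trace).re ≤ ∑ f, |hΔ.eigenvalues f| := by
  set μ := hΔ.eigenvalues with hμdef
  set V : Matrix ι ι ℂ := (hΔ.eigenvectorUnitary : Matrix ι ι ℂ) with hV
  have hVV' : star V * V = 1 := (Matrix.mem_unitaryGroup_iff').mp hΔ.eigenvectorUnitary.2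
  have hdiag : star V * (R - T) * V = Matrix.diagonal (RCLike.ofReal ∘ μ) :=
    hΔ.star_mul_self_mul_eq_diagonal
  set NR := star V * R * V with hNR
  set NT := star V * T * V with hNT
  have hNRps : NR.PosSemidef := by
    have := hR.conjTranspose_mul_mul_same V
    rwa [← Matrix.star_eq_conjTranspose] at this
  have hNTps : NT.PosSemidef := by
    have := hT.conjTranspose_mul_mul_same V
    rwa [← Matrix.star_eq_conjTranspose] at this
  have hsubN : NR - NT = Matrix.diagonal (RCLike.ofReal ∘ μ) := by
    rw [← hdiag, mul_sub, sub_mul]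
  have hμeq : ∀ f, (μ f : ℂ) = NR f f - NT f f := by
    intro f
    have := congrFun (congrFun hsubN f) f
    rw [Matrix.sub_apply] at this
    rw [this]
    simp [Matrix.diagonal_apply_eq]
  -- diagonal entries
  have hr := fun f => psd_diag NR hNRps f
  have ht := fun f => psd_diag NT hNTps f
  have hμr : ∀ f, μ f = (NR f f).re - (NT f f).re := by
    intro f
    have := congrArg Complex.re (hμeq f)
    simpa using this
  -- traces
  have trace_diagsum : ∀ (M : Matrix ι ι ℂ), (star V * M * V).trace = M.trace :=
    fun M => trace_unitary_conj M hΔ.eigenvectorUnitary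
  have hrsum : ∑ f, (NR f f).re = 1 := by
    have h1 : NR.trace = 1 := by rw [hNR, trace_diagsum, hRtr]
    have := congrArg Complex.re h1
    rw [Matrix.trace] at this
    simpa [Complex.re_sum, Matrix.diag] using this
  have htsum : ∑ f, (NT f f).re = 1 := by
    have h1 : NT.trace = 1 := by rw [hNT, trace_diagsum, hTtr]
    have := congrArg Complex.re h1
    rw [Matrix.trace] at this
    simpa [Complex.re_sum, Matrix.diag] using this
  have hsum0 : ∑ f, μ f = 0 := by
    rw [Finset.sum_congr rfl fun f _ => hμr f, Finset.sum_sub_distrib, hrsum, htsum, sub_self]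
  constructor
  · calc ∑ f, |μ f| ≤ ∑ f, ((NR f f).re + (NT f f).re) := by
          refine Finset.sum_le_sum fun f _ => ?_
          rw [hμr f]
          exact le_trans (abs_sub _ _) (by
            rw [abs_of_nonneg (hr f).2, abs_of_nonneg (ht f).2])
      _ = 2 := by rw [Finset.sum_add_distrib, hrsum, htsum]; norm_num
  · -- lower bound
    set NP := star V * P * V with hNP
    have hNPps : NP.PosSemidef := by
      have := hP.conjTranspose_mul_mul_same V
      rwa [← Matrix.star_eq_conjTranspose] at this
    have hNP1ps : (1 - NP).PosSemidef := by
      have := hP1.conjTranspose_mul_mul_same V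
      rw [← Matrix.star_eq_conjTranspose] at this
      have heq : star V * (1 - P) * V = 1 - NP := by
        rw [mul_sub, sub_mul, mul_one, hVV', hNP]
      rwa [heq] at this
    have hm0 : ∀ f, 0 ≤ (NP f f).re := fun f => (psd_diag NP hNPps f).2
    have hm1 : ∀ f, (NP f f).re ≤ 1 := by
      intro f
      have h2 := (psd_diag _ hNP1ps f).2
      have : ((1 - NP) f f).re = 1 - (NP f f).re := by
        rw [Matrix.sub_apply]
        simp [Matrix.one_apply_eq]
      linarith [this ▸ h2]
    have htr : (((R - T) * P).trace).re = ∑ f, μ f * (NP f f).re := by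
      have h1 := trace_eig (R - T) P hΔ
      have h2 : ∀ f, (μ f : ℂ) * NP f f = ((μ f * (NP f f).re : ℝ) : ℂ) := by
        intro f
        conv_lhs => rw [(psd_diag NP hNPps f).1]
        push_cast
        ring
      rw [h1, Finset.sum_congr rfl fun f _ => h2 f, ← Complex.ofReal_sum]
      simp
    rw [htr]
    have hpt : ∀ f, μ f * (NP f f).re ≤ (|μ f| + μ f)/2 := by
      intro f
      rcases le_or_gt 0 (μ f) with h | h
      · have : μ f * (NP f f).re ≤ μ f * 1 := mul_le_mul_of_nonneg_left (hm1 f) h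
        rw [abs_of_nonneg h]
        linarith
      · have : μ f * (NP f f).re ≤ 0 := mul_nonpos_of_nonpos_of_nonneg h.le (hm0 f)
        rw [abs_of_neg h]
        linarith
    have hsle : ∑ f, μ f * (NP f f).re ≤ ∑ f, (|μ f| + μ f)/2 :=
      Finset.sum_le_sum fun f _ => hpt f
    have hsum : ∑ f, (|μ f| + μ f)/2 = (∑ f, |μ f|)/2 := by
      rw [← Finset.sum_div, Finset.sum_add_distrib, hsum0, add_zero]
    linarith [hsum ▸ hsle]
end eig

/-- for distinct density matrices `ρ ≠ τ`, the trace distance of tensor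
powers `‖ρ^{⊗n} − τ^{⊗n}‖₁` (sum of absolute values of eigenvalues of the Hermitian
difference) tends to 2; equivalently there are orthogonal projectors `Pₙ` with
`tr(ρ^{⊗n}Pₙ) → 1` and `tr(τ^{⊗n}Pₙ) → 0`. -/
theorem stmt11 {d : ℕ} (ρ τ : Matrix (Fin d) (Fin d) ℂ)
    (hρ : ρ.PosSemidef) (hρtr : ρ.trace = 1)
    (hτ : τ.PosSemidef) (hτtr : τ.trace = 1) (hne : ρ ≠ τ)
    (hH : ∀ n : ℕ, (tpow ρ n - tpow τ n).IsHermitian) :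
    Tendsto (fun n : ℕ => ∑ f, |(hH n).eigenvalues f|) atTop (nhds 2) ∧
    ∃ P : (n : ℕ) → Matrix (Fin n → Fin d) (Fin n → Fin d) ℂ,
      (∀ n, (P n).IsHermitian ∧ P n * P n = P n) ∧
      Tendsto (fun n : ℕ => ((tpow ρ n * P n).trace).re) atTop (nhds 1) ∧
      Tendsto (fun n : ℕ => ((tpow τ n * P n).trace).re) atTop (nhds 0) := by
  obtain ⟨Q, a, b, hQps, hQ1ps, hQi, haQ, hbQ, hb0, hba, ha1⟩ :=
    percopy ρ τ hρ hρtr hτ hτtr hne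
  have hQh : Q.IsHermitian := hQps.1
  obtain ⟨hlimA, hlimB⟩ := acc_limits a b hb0 hba ha1
  -- properties of tpow
  have htpow_ps : ∀ (R : Matrix (Fin d) (Fin d) ℂ), R.PosSemidef → ∀ n, (tpow R n).PosSemidef :=
    fun R hR n => by rw [tpow_eq_tpk]; exact tpk_posSemidef _ (fun _ => hR)
  have htpow_tr : ∀ (R : Matrix (Fin d) (Fin d) ℂ), R.trace = 1 → ∀ n, (tpow R n).trace = 1 :=
    fun R hR n => by rw [tpow_eq_tpk, tpk_trace]; simp [hR]
  -- projector properties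
  have hPherm : ∀ n, (pmat Q ((a+b)/2) n)ᴴ = pmat Q ((a+b)/2) n :=
    fun n => pmat_herm Q hQh _ n
  have hPidem : ∀ n, pmat Q ((a+b)/2) n * pmat Q ((a+b)/2) n = pmat Q ((a+b)/2) n :=
    fun n => pmat_idem Q hQi _ n
  have hPps : ∀ n, (pmat Q ((a+b)/2) n).PosSemidef :=
    fun n => proj_psd _ (hPherm n) (hPidem n)
  have hP1ps : ∀ n, ((1 : Matrix (Fin n → Fin d) (Fin n → Fin d) ℂ)
      - pmat Q ((a+b)/2) n).PosSemidef := by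
    intro n
    apply proj_psd
    · rw [Matrix.conjTranspose_sub, Matrix.conjTranspose_one, hPherm n]
    · rw [sub_mul, one_mul, mul_sub, mul_one, hPidem n, sub_self, sub_zero]
  -- trace functions
  have htrA : ∀ n, ((tpow ρ n * pmat Q ((a+b)/2) n).trace).re
      = ∑ x ∈ Finset.univ.filter (fun x : Fin n → Bool => (a+b)/2 * n ≤ cnt x), wgt a x := by
    intro n
    rw [pmat_trace Q ρ a haQ hρtr _ n]
    exact Complex.ofReal_re _
  have htrB : ∀ n, ((tpow τ n * pmat Q ((a+b)/2) n).trace).re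
      = ∑ x ∈ Finset.univ.filter (fun x : Fin n → Bool => (a+b)/2 * n ≤ cnt x), wgt b x := by
    intro n
    rw [pmat_trace Q τ b hbQ hτtr _ n]
    exact Complex.ofReal_re _
  have hlimA' : Tendsto (fun n : ℕ => ((tpow ρ n * pmat Q ((a+b)/2) n).trace).re)
      atTop (nhds 1) := by
    rw [funext htrA]; exact hlimA
  have hlimB' : Tendsto (fun n : ℕ => ((tpow τ n * pmat Q ((a+b)/2) n).trace).re)
      atTop (nhds 0) := by
    rw [funext htrB]; exact hlimB
  -- eigenvalue bounds
  have heig := fun n => eig_bounds (tpow ρ n) (tpow τ n) (pmat Q ((a+b)/2) n)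
    (htpow_ps ρ hρ n) (htpow_tr ρ hρtr n) (htpow_ps τ hτ n) (htpow_tr τ hτtr n)
    (hPps n) (hP1ps n) (hH n)
  have hdiff : ∀ n, (((tpow ρ n - tpow τ n) * pmat Q ((a+b)/2) n).trace).re
      = ((tpow ρ n * pmat Q ((a+b)/2) n).trace).re
        - ((tpow τ n * pmat Q ((a+b)/2) n).trace).re := by
    intro n
    rw [sub_mul, Matrix.trace_sub, Complex.sub_re]
  constructor
  · refine tendsto_of_tendsto_of_tendsto_of_le_of_le
      (g := fun n : ℕ => 2 * (((tpow ρ n * pmat Q ((a+b)/2) n).trace).re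
        - ((tpow τ n * pmat Q ((a+b)/2) n).trace).re))
      (h := fun _ : ℕ => (2:ℝ)) ?_ ?_ ?_ ?_
    · have := (hlimA'.sub hlimB').const_mul 2
      simpa using this
    · exact tendsto_const_nhds
    · intro n
      have h2 := (heig n).2
      rw [hdiff n] at h2
      exact h2
    · intro n
      exact (heig n).1
  · exact ⟨fun n => pmat Q ((a+b)/2) n, fun n => ⟨hPherm n, hPidem n⟩, hlimA', hlimB'⟩
end

section
/- Let the 4×4 Hermitian matrix Z have entries as in (1/2)(X₁⊗Y₁ + X₂⊗Y₂) with X₁ = s₀σ₀+s₁σ₁+s₂σ₂, Y₁ = t₀σ₀+t₁σ₁+t₂σ₂, X₂ = s₀σ₀+s₁σ₁−s₂σ₂, Y₂ = t₀σ₀+t₁σ₁−t₂σ₂ (Pauli matrices σᵢ). Then its eigenvalues are λ = ±√(s₂²t₂² + (s₀t₁ − s₁t₀)²) − s₁t₁ + s₀t₀ and λ = ±√(s₂²t₂² + (s₀t₁ + s₁t₀)²) + s₁t₁ + s₀t₀. -/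
open Matrix Kronecker

/-- Pauli matrices (σ₀ = I₂). -/
noncomputable def pauli : Fin 4 → Matrix (Fin 2) (Fin 2) ℂ
  | 0 => 1
  | 1 => !![0, 1; 1, 0]
  | 2 => !![0, -Complex.I; Complex.I, 0]
  | 3 => !![1, 0; 0, -1]

def myE : Fin 4 ≃ Fin 2 × Fin 2 where
  toFun := ![(0,0),(0,1),(1,0),(1,1)]
  invFun := fun p => ![![0,1],![2,3]] p.1 p.2
  left_inv := by decide
  right_inv := by decide

set_option maxHeartbeats 1000000 in
/-- the eigenvalues of `(1/2)(X₁⊗Y₁ + X₂⊗Y₂)` with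
`X₁ = s₀σ₀+s₁σ₁+s₂σ₂`, `Y₁ = t₀σ₀+t₁σ₁+t₂σ₂`, `X₂, Y₂` having the sign of the
`σ₂`-component flipped, are `±√(s₂²t₂² + (s₀t₁ − s₁t₀)²) − s₁t₁ + s₀t₀` and
`±√(s₂²t₂² + (s₀t₁ + s₁t₀)²) + s₁t₁ + s₀t₀`. -/
theorem stmt15 (s0 s1 s2 t0 t1 t2 : ℝ) :
    spectrum ℂ
      ((1 / 2 : ℂ) •
        (((s0 : ℂ) • pauli 0 + (s1 : ℂ) • pauli 1 + (s2 : ℂ) • pauli 2) ⊗ₖ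
            ((t0 : ℂ) • pauli 0 + (t1 : ℂ) • pauli 1 + (t2 : ℂ) • pauli 2)
          + ((s0 : ℂ) • pauli 0 + (s1 : ℂ) • pauli 1 - (s2 : ℂ) • pauli 2) ⊗ₖ
            ((t0 : ℂ) • pauli 0 + (t1 : ℂ) • pauli 1 - (t2 : ℂ) • pauli 2)))
      = {((Real.sqrt (s2 ^ 2 * t2 ^ 2 + (s0 * t1 - s1 * t0) ^ 2) - s1 * t1 + s0 * t0 : ℝ) : ℂ),
         ((-Real.sqrt (s2 ^ 2 * t2 ^ 2 + (s0 * t1 - s1 * t0) ^ 2) - s1 * t1 + s0 * t0 : ℝ) : ℂ),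
         ((Real.sqrt (s2 ^ 2 * t2 ^ 2 + (s0 * t1 + s1 * t0) ^ 2) + s1 * t1 + s0 * t0 : ℝ) : ℂ),
         ((-Real.sqrt (s2 ^ 2 * t2 ^ 2 + (s0 * t1 + s1 * t0) ^ 2) + s1 * t1 + s0 * t0 : ℝ) : ℂ)} := by
  have hre : (Matrix.reindexAlgEquiv ℂ ℂ myE.symm)
      ((1 / 2 : ℂ) •
        (((s0 : ℂ) • pauli 0 + (s1 : ℂ) • pauli 1 + (s2 : ℂ) • pauli 2) ⊗ₖ
            ((t0 : ℂ) • pauli 0 + (t1 : ℂ) • pauli 1 + (t2 : ℂ) • pauli 2)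
          + ((s0 : ℂ) • pauli 0 + (s1 : ℂ) • pauli 1 - (s2 : ℂ) • pauli 2) ⊗ₖ
            ((t0 : ℂ) • pauli 0 + (t1 : ℂ) • pauli 1 - (t2 : ℂ) • pauli 2))) =
      !![(s0*t0 : ℂ), s0*t1, s1*t0, s1*t1 - s2*t2;
         s0*t1, s0*t0, s1*t1 + s2*t2, s1*t0;
         s1*t0, s1*t1 + s2*t2, s0*t0, s0*t1;
         s1*t1 - s2*t2, s1*t0, s0*t1, s0*t0] := by
    ext i j
    fin_cases i <;> fin_cases j <;>
      simp [myE, pauli, Matrix.kroneckerMap_apply, Matrix.one_apply,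
        Matrix.reindexAlgEquiv_apply] <;>
      first | ring1 | (ring_nf; rw [Complex.I_sq]; ring1)
  rw [← AlgEquiv.spectrum_eq (Matrix.reindexAlgEquiv ℂ ℂ myE.symm), hre]
  have hu : ((Real.sqrt (s2 ^ 2 * t2 ^ 2 + (s0 * t1 - s1 * t0) ^ 2) : ℝ) : ℂ) ^ 2
      = ((s2:ℂ) ^ 2 * t2 ^ 2 + ((s0:ℂ) * t1 - s1 * t0) ^ 2) := by
    norm_cast
    rw [Real.sq_sqrt (by positivity)]
  have hv : ((Real.sqrt (s2 ^ 2 * t2 ^ 2 + (s0 * t1 + s1 * t0) ^ 2) : ℝ) : ℂ) ^ 2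
      = ((s2:ℂ) ^ 2 * t2 ^ 2 + ((s0:ℂ) * t1 + s1 * t0) ^ 2) := by
    norm_cast
    rw [Real.sq_sqrt (by positivity)]
  ext μ
  rw [spectrum.mem_iff, Matrix.isUnit_iff_isUnit_det, isUnit_iff_ne_zero, not_ne_iff]
  have hA : (algebraMap ℂ (Matrix (Fin 4) (Fin 4) ℂ)) μ -
      !![(s0*t0 : ℂ), s0*t1, s1*t0, s1*t1 - s2*t2;
         s0*t1, s0*t0, s1*t1 + s2*t2, s1*t0;
         s1*t0, s1*t1 + s2*t2, s0*t0, s0*t1;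
         s1*t1 - s2*t2, s1*t0, s0*t1, s0*t0] =
      !![μ - s0*t0, -(s0*t1), -(s1*t0), -(s1*t1 - s2*t2);
         -(s0*t1), μ - s0*t0, -(s1*t1 + s2*t2), -(s1*t0);
         -(s1*t0), -(s1*t1 + s2*t2), μ - s0*t0, -(s0*t1);
         -(s1*t1 - s2*t2), -(s1*t0), -(s0*t1), μ - s0*t0] := by
    ext i j
    fin_cases i <;> fin_cases j <;>
      simp [Matrix.algebraMap_matrix_apply] <;> ring1
  rw [hA]
  have hdet : (!![μ - s0*t0, -(s0*t1), -(s1*t0), -(s1*t1 - s2*t2);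
         -(s0*t1), μ - s0*t0, -(s1*t1 + s2*t2), -(s1*t0);
         -(s1*t0), -(s1*t1 + s2*t2), μ - s0*t0, -(s0*t1);
         -(s1*t1 - s2*t2), -(s1*t0), -(s0*t1), μ - s0*t0] : Matrix (Fin 4) (Fin 4) ℂ).det =
      (μ - ((Real.sqrt (s2 ^ 2 * t2 ^ 2 + (s0 * t1 - s1 * t0) ^ 2) - s1 * t1 + s0 * t0 : ℝ) : ℂ)) *
      (μ - ((-Real.sqrt (s2 ^ 2 * t2 ^ 2 + (s0 * t1 - s1 * t0) ^ 2) - s1 * t1 + s0 * t0 : ℝ) : ℂ)) *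
      ((μ - ((Real.sqrt (s2 ^ 2 * t2 ^ 2 + (s0 * t1 + s1 * t0) ^ 2) + s1 * t1 + s0 * t0 : ℝ) : ℂ)) *
       (μ - ((-Real.sqrt (s2 ^ 2 * t2 ^ 2 + (s0 * t1 + s1 * t0) ^ 2) + s1 * t1 + s0 * t0 : ℝ) : ℂ))) := by
    have h1 : (μ - ((Real.sqrt (s2 ^ 2 * t2 ^ 2 + (s0 * t1 - s1 * t0) ^ 2) - s1 * t1 + s0 * t0 : ℝ) : ℂ)) *
      (μ - ((-Real.sqrt (s2 ^ 2 * t2 ^ 2 + (s0 * t1 - s1 * t0) ^ 2) - s1 * t1 + s0 * t0 : ℝ) : ℂ)) *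
      ((μ - ((Real.sqrt (s2 ^ 2 * t2 ^ 2 + (s0 * t1 + s1 * t0) ^ 2) + s1 * t1 + s0 * t0 : ℝ) : ℂ)) *
       (μ - ((-Real.sqrt (s2 ^ 2 * t2 ^ 2 + (s0 * t1 + s1 * t0) ^ 2) + s1 * t1 + s0 * t0 : ℝ) : ℂ))) =
        ((μ - (s0:ℂ)*t0 + (s1:ℂ)*t1)^2
            - ((Real.sqrt (s2 ^ 2 * t2 ^ 2 + (s0 * t1 - s1 * t0) ^ 2) : ℝ) : ℂ)^2) *
        ((μ - (s0:ℂ)*t0 - (s1:ℂ)*t1)^2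
            - ((Real.sqrt (s2 ^ 2 * t2 ^ 2 + (s0 * t1 + s1 * t0) ^ 2) : ℝ) : ℂ)^2) := by
      push_cast
      ring
    rw [h1, hu, hv]
    simp [Matrix.det_succ_row_zero, Fin.sum_univ_succ, Fin.succAbove]
    ring
  rw [hdet]
  simp only [mul_eq_zero, sub_eq_zero, Set.mem_insert_iff, Set.mem_singleton_iff]
  tauto
end
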